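/- arXiv:1001.3655 — 5 statements merged into one kernel-verified Lean document; each statement's English description precedes it below -/
import Mathlib

section
/- Let Φ be a linear map on L(V) such that J(Φ) is Hermitian, and let k ∈ ℕ. The following are equivalent: (1) Φ is k-positive; (2) Ψ∘Φ is k-superpositive for every k-superpositive map Ψ on L(V); (3) Ψ∘Φ is completely positive for every k-superpositive map Ψ on L(V); (4) ⟨ω, J(Ψ∘Φ) ω⟩ ≥ 0 for every k-superpositive map Ψ on L(V), where ω = Σ_α e_α⊗e_α. -/
open scoped ComplexOrder Kronecker
open Matrix

/-- Square complex matrices of size `n`, i.e. operators on `V = ℂ^n`. -/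
abbrev Mat (n : ℕ) := Matrix (Fin n) (Fin n) ℂ

/-- Operators on `V ⊗ V`, identified with matrices indexed by pairs. -/
abbrev Mat2 (n : ℕ) := Matrix (Fin n × Fin n) (Fin n × Fin n) ℂ

/-- Linear maps on `L(V)`. -/
abbrev MapV (n : ℕ) := Mat n →ₗ[ℂ] Mat n

variable {n : ℕ}

/-- The Jamiołkowski isomorphism `J(Φ) = (Φ ⊗ id)(|ω⟩⟨ω|)`, `ω = Σ_α e_α ⊗ e_α`,
written out in matrix entries: `J(Φ)_{(a,b),(c,d)} = Φ(E_{bd})_{ac}`. -/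
def Jmat (Φ : MapV n) : Mat2 n :=
  Matrix.of fun p q => Φ (Matrix.single p.2 q.2 1) p.1 q.1

/-- The inverse of the Jamiołkowski isomorphism. -/
noncomputable def Jinv (A : Mat2 n) : MapV n where
  toFun ξ := Matrix.of fun α β => ∑ γ, ∑ δ, ξ γ δ * A (α, γ) (β, δ)
  map_add' x y := by
    ext α β
    simp [Matrix.add_apply, add_mul, Finset.sum_add_distrib]
  map_smul' c x := by
    ext α β
    simp [Matrix.smul_apply, smul_eq_mul, Finset.mul_sum, mul_assoc]

/-- The circled product `A ⊙ B = J(J⁻¹(A) ∘ J⁻¹(B))`. -/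
noncomputable def odot (A B : Mat2 n) : Mat2 n := Jmat (Jinv A ∘ₗ Jinv B)

/-- Tensor product of vectors of `V`, as a vector of `V ⊗ V`. -/
def vecTens (u v : Fin n → ℂ) : Fin n × Fin n → ℂ := fun p => u p.1 * v p.2

/-- The maximally entangled (unnormalized) vector `ω = Σ_α e_α ⊗ e_α`. -/
def omegaVec (n : ℕ) : Fin n × Fin n → ℂ := fun p => if p.1 = p.2 then 1 else 0

/-- `A` is `k`-block positive: `⟨Σ u_i⊗v_i, A (Σ u_i⊗v_i)⟩ ≥ 0` for all `u, v`. -/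
def IsKBlockPos (k : ℕ) (A : Mat2 n) : Prop :=
  ∀ u v : Fin k → (Fin n → ℂ),
    0 ≤ star (∑ i, vecTens (u i) (v i)) ⬝ᵥ A.mulVec (∑ i, vecTens (u i) (v i))

/-- `A` is `k`-entangled: it lies in the convex hull of the operators
`|w⟩⟨w|` with `w = Σ_{i=1}^k u_i ⊗ v_i`. -/
def IsKEntangled (k : ℕ) (A : Mat2 n) : Prop :=
  A ∈ convexHull ℝ {M : Mat2 n | ∃ u v : Fin k → (Fin n → ℂ),
    M = Matrix.vecMulVec (∑ i, vecTens (u i) (v i)) (star (∑ i, vecTens (u i) (v i)))}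

/-- The map `Φ ⊗ id_k` on `L(V ⊗ ℂ^k)` (as a plain function on matrices). -/
def tensorIdFun (k : ℕ) (Φ : MapV n) (M : Matrix (Fin n × Fin k) (Fin n × Fin k) ℂ) :
    Matrix (Fin n × Fin k) (Fin n × Fin k) ℂ :=
  Matrix.of fun p q => Φ (Matrix.of fun a b => M (a, p.2) (b, q.2)) p.1 q.1

/-- `Φ` is `k`-positive: `Φ ⊗ id_k` maps positive semidefinite operators on
`V ⊗ ℂ^k` to positive semidefinite operators. -/
def IsKPos (k : ℕ) (Φ : MapV n) : Prop :=
  ∀ M : Matrix (Fin n × Fin k) (Fin n × Fin k) ℂ, M.PosSemidef → (tensorIdFun k Φ M).PosSemidef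

/-- `Φ` is completely positive: `k`-positive for every `k`. -/
def IsCompPos (Φ : MapV n) : Prop := ∀ k, IsKPos k Φ

/-- `Φ` is `k`-superpositive: `Φ(ξ) = Σ_i X_i^* ξ X_i` with all `rank X_i ≤ k`. -/
def IsKSuperPos (k : ℕ) (Φ : MapV n) : Prop :=
  ∃ (m : ℕ) (X : Fin m → Mat n), (∀ i, (X i).rank ≤ k) ∧
    ∀ ξ, Φ ξ = ∑ i, (X i)ᴴ * ξ * X i

/-- The Hilbert–Schmidt inner product on `L(L(V))`:
`(Φ|Ψ) = Σ_{α,β} (Φ(E_{αβ}) | Ψ(E_{αβ}))` over the matrix-unit orthonormal basis. -/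
noncomputable def hsInnerMap (Φ Ψ : MapV n) : ℂ :=
  ∑ α : Fin n, ∑ β : Fin n,
    ((Φ (Matrix.single α β 1))ᴴ * Ψ (Matrix.single α β 1)).trace

/-- The Hilbert–Schmidt trace of a map `Θ` on `L(V)`:
`Tr Θ = Σ_{α,β} (E_{αβ} | Θ(E_{αβ}))`. -/
noncomputable def mapTrace (Θ : MapV n) : ℂ :=
  ∑ α : Fin n, ∑ β : Fin n,
    ((Matrix.single α β (1 : ℂ))ᴴ * Θ (Matrix.single α β 1)).trace

/-- The adjoint of a map `Φ` on `L(V)` with respect to the Hilbert–Schmidt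
inner product `(A|B) = Tr(A^* B)`. -/
noncomputable def hsAdj (Φ : MapV n) : MapV n where
  toFun ξ := ∑ γ : Fin n, ∑ δ : Fin n,
    (((Φ (Matrix.single γ δ 1))ᴴ * ξ).trace) • Matrix.single γ δ 1
  map_add' x y := by
    simp [Matrix.mul_add, Matrix.trace_add, add_smul, Finset.sum_add_distrib]
  map_smul' c x := by
    simp [Matrix.mul_smul, Matrix.trace_smul, smul_smul, Finset.smul_sum]

/-- `Φ` belongs to `J⁻¹(H(V⊗V))`, i.e. `J(Φ)` is Hermitian. -/
def InJinvH (Φ : MapV n) : Prop := (Jmat Φ).IsHermitian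

/-- Dual cone of a set of Hermitian operators on `V ⊗ V`, inside `H(V⊗V)`. -/
def hermDual (S : Set (Mat2 n)) : Set (Mat2 n) :=
  {B | B.IsHermitian ∧ ∀ A ∈ S, 0 ≤ (A * B).trace}

/-- Dual cone of a set of maps, inside `J⁻¹(H(V⊗V))`, with respect to the
Hilbert–Schmidt inner product of maps. -/
def mapDual (S : Set (MapV n)) : Set (MapV n) :=
  {Ψ | InJinvH Ψ ∧ ∀ Φ ∈ S, 0 ≤ hsInnerMap Φ Ψ}

/-- Operators on `ℂ^h ⊗ ℂ^d`. -/
abbrev MatH (h d : ℕ) := Matrix (Fin h × Fin d) (Fin h × Fin d) ℂ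

/-- `ρ` is a state: positive semidefinite with trace one. -/
def IsState {h d : ℕ} (ρ : MatH h d) : Prop := ρ.PosSemidef ∧ ρ.trace = 1

/-- `ρ` can be written as a sum of `l` tensor products of positive semidefinite
operators. -/
def HasSepLen (h d : ℕ) (ρ : MatH h d) (l : ℕ) : Prop :=
  ∃ (A : Fin l → Matrix (Fin h) (Fin h) ℂ) (B : Fin l → Matrix (Fin d) (Fin d) ℂ),
    (∀ i, (A i).PosSemidef) ∧ (∀ i, (B i).PosSemidef) ∧ ρ = ∑ i, A i ⊗ₖ B i

/-- `ρ` is separable: a convex combination of tensor products of states. -/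
def IsSepState (h d : ℕ) (ρ : MatH h d) : Prop :=
  ∃ (l : ℕ) (p : Fin l → ℝ) (A : Fin l → Matrix (Fin h) (Fin h) ℂ)
    (B : Fin l → Matrix (Fin d) (Fin d) ℂ),
    (∀ i, 0 < p i) ∧ (∑ i, p i = 1) ∧
    (∀ i, (A i).PosSemidef ∧ (A i).trace = 1) ∧
    (∀ i, (B i).PosSemidef ∧ (B i).trace = 1) ∧
    ρ = ∑ i, (p i : ℂ) • (A i ⊗ₖ B i)

/-- The length of a separable state: the least `l` such that `ρ` is a sum of `l`
tensor products of positive semidefinite operators. -/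
noncomputable def sepLength (h d : ℕ) (ρ : MatH h d) : ℕ := sInf {l | HasSepLen h d ρ l}

/-- `ρ` is a sum of `r` tensor products of Hermitian operators. -/
def HasHermDecomp (h d : ℕ) (ρ : MatH h d) (r : ℕ) : Prop :=
  ∃ (A : Fin r → Matrix (Fin h) (Fin h) ℂ) (B : Fin r → Matrix (Fin d) (Fin d) ℂ),
    (∀ i, (A i).IsHermitian) ∧ (∀ i, (B i).IsHermitian) ∧ ρ = ∑ i, A i ⊗ₖ B i

/-- The Schmidt rank of `ρ`: the least `r` such that `ρ` is a sum of `r` tensor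
products of Hermitian operators. -/
noncomputable def schmidtRank (h d : ℕ) (ρ : MatH h d) : ℕ := sInf {r | HasHermDecomp h d ρ r}

/-- The block `(⟨υ|⊗id) A (|υ⟩⊗id)` of an operator `A` on `V ⊗ V`. -/
noncomputable def blockFst (A : Mat2 n) (υ : Fin n → ℂ) : Mat n :=
  Matrix.of fun β δ => ∑ α, ∑ γ, star (υ α) * A (α, β) (γ, δ) * υ γ

/-- The block `(id⊗⟨u|) A (id⊗|u⟩)` of an operator `A` on `V ⊗ V`. -/
noncomputable def blockSnd (A : Mat2 n) (u : Fin n → ℂ) : Mat n :=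
  Matrix.of fun α γ => ∑ β, ∑ δ, star (u β) * A (α, β) (γ, δ) * u δ

/-- Real square matrices indexed by pairs: operators on `X ⊗ X`, `X = ℝ^n`. -/
abbrev RMat2 (n : ℕ) := Matrix (Fin n × Fin n) (Fin n × Fin n) ℝ

/-- The partial transposition `(id ⊗ t) A` on operators on `X ⊗ X`. -/
def ptrans (A : RMat2 n) : RMat2 n := Matrix.of fun p q => A (p.1, q.2) (q.1, p.2)

/-- The quartic polynomial `Σ_{a,b,c,d} A_{ab,cd} x^a y^b x^c y^d` associated to
an operator on `X ⊗ X`; `x`-variables are indexed by `Sum.inl`, `y`-variables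
by `Sum.inr`. -/
noncomputable def quarticPoly (A : RMat2 n) : MvPolynomial (Fin n ⊕ Fin n) ℝ :=
  ∑ a, ∑ b, ∑ c, ∑ e, MvPolynomial.C (A (a, b) (c, e)) *
    MvPolynomial.X (Sum.inl a) * MvPolynomial.X (Sum.inr b) *
    MvPolynomial.X (Sum.inl c) * MvPolynomial.X (Sum.inr e)

section Stmt11Aux

variable {n k : ℕ}

open Finset in
lemma sum_comm_rot3 {ι₁ ι₂ ι₃ M : Type*} [Fintype ι₁] [Fintype ι₂] [Fintype ι₃]
    [AddCommMonoid M] (f : ι₁ → ι₂ → ι₃ → M) :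
    ∑ a, ∑ b, ∑ c, f a b c = ∑ c, ∑ a, ∑ b, f a b c := by
  calc ∑ a, ∑ b, ∑ c, f a b c = ∑ a, ∑ c, ∑ b, f a b c :=
        Finset.sum_congr rfl fun a _ => Finset.sum_comm
    _ = ∑ c, ∑ a, ∑ b, f a b c := Finset.sum_comm

open Finset in
lemma sum_swap_blocks {ι₁ ι₂ ι₃ ι₄ M : Type*} [Fintype ι₁] [Fintype ι₂] [Fintype ι₃] [Fintype ι₄]
    [AddCommMonoid M] (f : ι₁ → ι₂ → ι₃ → ι₄ → M) :
    ∑ a, ∑ b, ∑ c, ∑ d, f a b c d = ∑ c, ∑ d, ∑ a, ∑ b, f a b c d := by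
  calc ∑ a, ∑ b, ∑ c, ∑ d, f a b c d
      = ∑ a, ∑ c, ∑ b, ∑ d, f a b c d := Finset.sum_congr rfl fun a _ => Finset.sum_comm
    _ = ∑ c, ∑ a, ∑ b, ∑ d, f a b c d := Finset.sum_comm
    _ = ∑ c, ∑ a, ∑ d, ∑ b, f a b c d :=
        Finset.sum_congr rfl fun c _ => Finset.sum_congr rfl fun a _ => Finset.sum_comm
    _ = ∑ c, ∑ d, ∑ a, ∑ b, f a b c d := Finset.sum_congr rfl fun c _ => Finset.sum_comm

/-- entry expansion of a triple product `Aᴴ * M * B`. -/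
lemma conj_mul_mul_apply {ι κ κ' : Type*} [Fintype ι] (A : Matrix ι κ ℂ) (M : Matrix ι ι ℂ)
    (B : Matrix ι κ' ℂ) (x : κ) (y : κ') :
    (Aᴴ * M * B) x y = ∑ p, ∑ q, star (A p x) * M p q * B q y := by
  simp only [Matrix.mul_apply, Matrix.conjTranspose_apply, Finset.sum_mul, Finset.mul_sum]
  rw [Finset.sum_comm]

lemma quad_conj {ι κ : Type*} [Fintype ι] [Fintype κ] (A : Matrix ι ι ℂ) (W : Matrix ι κ ℂ)
    (z : κ → ℂ) :
    star z ⬝ᵥ ((Wᴴ * A * W) *ᵥ z) = star (W *ᵥ z) ⬝ᵥ (A *ᵥ (W *ᵥ z)) := by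
  simp only [Matrix.star_mulVec, Matrix.dotProduct_mulVec, Matrix.vecMul_vecMul,
    Matrix.mul_assoc]

lemma herm_sum {ι κ : Type*} [Fintype ι] (s : Finset ι) (f : ι → Matrix κ κ ℂ)
    (h : ∀ i ∈ s, (f i).IsHermitian) : (∑ i ∈ s, f i).IsHermitian := by
  classical
  induction s using Finset.induction with
  | empty => simpa using Matrix.isHermitian_zero
  | insert _ _ hx ih =>
    rw [Finset.sum_insert hx]
    exact Matrix.IsHermitian.add (h _ (Finset.mem_insert_self _ _))
      (ih fun i hi => h i (Finset.mem_insert_of_mem hi))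

lemma psd_sum {ι κ : Type*} [Fintype ι] [Fintype κ] (s : Finset ι) (f : ι → Matrix κ κ ℂ)
    (h : ∀ i ∈ s, (f i).PosSemidef) : (∑ i ∈ s, f i).PosSemidef := by
  classical
  induction s using Finset.induction with
  | empty => simpa using Matrix.PosSemidef.zero
  | insert _ _ hx ih =>
    rw [Finset.sum_insert hx]
    exact Matrix.PosSemidef.add (h _ (Finset.mem_insert_self _ _))
      (ih fun i hi => h i (Finset.mem_insert_of_mem hi))

open scoped MatrixOrder Matrix.Norms.L2Operator in
lemma psd_eq_ct_mul_self {m : Type*} [Fintype m] [DecidableEq m] {A : Matrix m m ℂ}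
    (hA : A.PosSemidef) : ∃ B : Matrix m m ℂ, A = Bᴴ * B := by
  obtain ⟨B, rfl⟩ := CStarAlgebra.nonneg_iff_eq_star_mul_self.mp hA.nonneg
  exact ⟨B, rfl⟩

/-- entry expansion of `Φ ξ` through the Choi matrix. -/
lemma phi_ent (Φ : MapV n) (ξ : Mat n) (p q : Fin n) :
    Φ ξ p q = ∑ b, ∑ e, ξ b e * Jmat Φ (p, b) (q, e) := by
  conv_lhs => rw [Matrix.matrix_eq_sum_single ξ]
  rw [map_sum, Matrix.sum_apply]
  refine Finset.sum_congr rfl fun b _ => ?_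
  rw [map_sum, Matrix.sum_apply]
  refine Finset.sum_congr rfl fun e _ => ?_
  have : Matrix.single b e (ξ b e) = ξ b e • Matrix.single b e 1 := by
    rw [Matrix.smul_single, smul_eq_mul, mul_one]
  rw [this, LinearMap.map_smul, Matrix.smul_apply, smul_eq_mul]
  rfl

end Stmt11Aux
section Stmt11Aux2

variable {n k : ℕ}

/-- `C ⊗ I` acting with a Kronecker delta on the second coordinate. -/
def tensorSnd {α β : Type*} (C : Matrix α β ℂ) (m : ℕ) : Matrix (α × Fin m) (β × Fin m) ℂ :=
  Matrix.of fun P Q => if P.2 = Q.2 then C P.1 Q.1 else 0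

/-- Reshaped row `r` of `B`, as `I ⊗ (row r)` with delta on the first coordinate. -/
def vmatB {ι : Type*} (B : Matrix ι (Fin n × Fin k) ℂ) (r : ι) :
    Matrix (Fin n × Fin n) (Fin n × Fin k) ℂ :=
  Matrix.of fun P Q => if P.1 = Q.1 then B r (P.2, Q.2) else 0

/-- The single-Kraus conjugation map `ξ ↦ Xᴴ ξ X`. -/
noncomputable def kraus (X : Mat n) : MapV n where
  toFun ξ := Xᴴ * ξ * X
  map_add' x y := by simp [Matrix.mul_add, Matrix.add_mul]
  map_smul' c x := by simp [mul_smul_comm, smul_mul_assoc]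

lemma kraus_apply (X ξ : Mat n) : kraus X ξ = Xᴴ * ξ * X := rfl

lemma jmat_kraus_comp (Φ : MapV n) (X : Mat n) :
    Jmat (kraus X ∘ₗ Φ) = (tensorSnd X n)ᴴ * Jmat Φ * tensorSnd X n := by
  ext P Q
  obtain ⟨P1, P2⟩ := P; obtain ⟨Q1, Q2⟩ := Q
  show (Xᴴ * Φ (Matrix.single P2 Q2 1) * X) P1 Q1 = _
  rw [conj_mul_mul_apply, conj_mul_mul_apply]
  simp only [Fintype.sum_prod_type, tensorSnd, Matrix.of_apply, apply_ite, star_zero, ite_mul,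
    zero_mul, mul_ite, mul_zero, Finset.sum_ite_eq, Finset.sum_ite_eq', Finset.mem_univ, if_true]
  refine Finset.sum_congr rfl fun p _ => ?_
  rw [Finset.sum_comm]
  simp only [Finset.sum_ite_eq', Finset.mem_univ, if_true]
  rfl

lemma tensorSnd_mulVec_omega (X : Mat n) :
    tensorSnd X n *ᵥ omegaVec n = fun P => X P.1 P.2 := by
  funext P
  simp only [Matrix.mulVec, dotProduct, Fintype.sum_prod_type, tensorSnd, omegaVec,
    Matrix.of_apply, ite_mul, zero_mul, mul_ite, mul_one, mul_zero]
  simp [Finset.sum_ite_eq', Finset.sum_ite_eq]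

end Stmt11Aux2
section Stmt11Aux3

variable {n k : ℕ}

lemma quad_sum {μ ι : Type*} [Fintype μ] [Fintype ι] (f : ι → Matrix μ μ ℂ) (z : μ → ℂ) :
    star z ⬝ᵥ (∑ r, f r) *ᵥ z = ∑ r, star z ⬝ᵥ f r *ᵥ z := by
  simp only [dotProduct, Matrix.mulVec, Matrix.sum_apply, Finset.sum_mul,
    Finset.mul_sum, Pi.star_apply]
  rw [sum_comm_rot3 fun p q r => star (z p) * (f r p q * z q)]

lemma bp_of_four (Φ : MapV n)
    (h4 : ∀ Ψ : MapV n, IsKSuperPos k Ψ →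
      0 ≤ star (omegaVec n) ⬝ᵥ (Jmat (Ψ ∘ₗ Φ)).mulVec (omegaVec n)) :
    IsKBlockPos k (Jmat Φ) := by
  intro u v
  set X : Mat n := (Matrix.of fun p j => u j p) * (Matrix.of fun (j : Fin k) a => v j a) with hX
  have hrank : X.rank ≤ k := by
    refine le_trans (Matrix.rank_mul_le_left _ _) ?_
    simpa using Matrix.rank_le_card_width (Matrix.of fun p (j : Fin k) => u j p)
  have hsup : IsKSuperPos k (kraus X) :=
    ⟨1, fun _ => X, fun _ => hrank, fun ξ => by simp [kraus_apply]⟩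
  have h := h4 (kraus X) hsup
  rw [jmat_kraus_comp, quad_conj, tensorSnd_mulVec_omega] at h
  have hw : (fun P : Fin n × Fin n => X P.1 P.2) = ∑ i, vecTens (u i) (v i) := by
    funext P
    simp [hX, Matrix.mul_apply, vecTens, Finset.sum_apply]
  rwa [hw] at h

lemma tensorId_BtB (Φ : MapV n) {ι : Type*} [Fintype ι] (B : Matrix ι (Fin n × Fin k) ℂ) :
    tensorIdFun k Φ (Bᴴ * B) = ∑ r : ι, (vmatB B r)ᴴ * Jmat Φ * vmatB B r := by
  ext P Q
  obtain ⟨P1, P2⟩ := P; obtain ⟨Q1, Q2⟩ := Q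
  show Φ (Matrix.of fun a b => (Bᴴ * B) (a, P2) (b, Q2)) P1 Q1 = _
  rw [phi_ent]
  simp only [Matrix.sum_apply, conj_mul_mul_apply, Fintype.sum_prod_type, vmatB,
    Matrix.of_apply, Matrix.mul_apply, Matrix.conjTranspose_apply, apply_ite, star_zero,
    ite_mul, zero_mul, mul_ite, mul_zero, Finset.sum_ite_eq, Finset.sum_ite_eq',
    Finset.mem_univ, if_true, Finset.sum_mul, Finset.mul_sum, Finset.sum_ite_irrel,
    Finset.sum_const_zero]
  rw [sum_comm_rot3 fun a b r => star (B r (a, P2)) * B r (b, Q2) * Jmat Φ (P1, a) (Q1, b)]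
  refine Finset.sum_congr rfl fun r _ => ?_
  rw [Finset.sum_comm]
  exact Finset.sum_congr rfl fun a _ => Finset.sum_congr rfl fun b _ => by ring

lemma vmatB_mulVec {ι : Type*} (B : Matrix ι (Fin n × Fin k) ℂ) (r : ι)
    (z : Fin n × Fin k → ℂ) :
    vmatB B r *ᵥ z = ∑ s : Fin k, vecTens (fun p => z (p, s)) (fun a => B r (a, s)) := by
  funext P
  simp only [Matrix.mulVec, dotProduct, Fintype.sum_prod_type, vmatB, vecTens,
    Matrix.of_apply, ite_mul, zero_mul, Finset.sum_ite_eq, Finset.sum_ite_eq',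
    Finset.mem_univ, if_true, Finset.sum_apply, Finset.sum_ite_irrel, Finset.sum_const_zero]
  exact Finset.sum_congr rfl fun s _ => by ring

lemma one_of_bp (Φ : MapV n) (hΦ : (Jmat Φ).IsHermitian) (hbp : IsKBlockPos k (Jmat Φ)) :
    IsKPos k Φ := by
  intro M hM
  obtain ⟨B, rfl⟩ := psd_eq_ct_mul_self hM
  rw [tensorId_BtB]
  refine Matrix.PosSemidef.of_dotProduct_mulVec_nonneg ?_ ?_
  · exact herm_sum _ _ fun r _ => Matrix.isHermitian_conjTranspose_mul_mul _ hΦ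
  · intro z
    rw [quad_sum]
    refine Finset.sum_nonneg fun r _ => ?_
    rw [quad_conj, vmatB_mulVec]
    exact hbp _ _

lemma bp_of_one (Φ : MapV n) (h1 : IsKPos k Φ) : IsKBlockPos k (Jmat Φ) := by
  intro u v
  set A : Matrix (Fin 1) (Fin n × Fin k) ℂ := Matrix.of fun _ P => v P.2 P.1 with hA
  have hpsd := h1 (Aᴴ * A) (Matrix.posSemidef_conjTranspose_mul_self A)
  have e : (∑ i, vecTens (u i) (v i)) = vmatB A 0 *ᵥ (fun P : Fin n × Fin k => u P.2 P.1) := by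
    rw [vmatB_mulVec]
    exact Finset.sum_congr rfl fun s _ => rfl
  rw [e, ← quad_conj, show (vmatB A 0)ᴴ * Jmat Φ * vmatB A 0 = tensorIdFun k Φ (Aᴴ * A) from by
    rw [tensorId_BtB, Fin.sum_univ_one]]
  exact hpsd.dotProduct_mulVec_nonneg _

lemma compPos_of_kraus (Θ : MapV n) (m : ℕ) (Y : Fin m → Mat n)
    (hY : ∀ ξ, Θ ξ = ∑ i, (Y i)ᴴ * ξ * Y i) : IsCompPos Θ := by
  intro k' M hM
  have key : tensorIdFun k' Θ M = ∑ i, (tensorSnd (Y i) k')ᴴ * M * tensorSnd (Y i) k' := by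
    ext P Q
    obtain ⟨P1, P2⟩ := P; obtain ⟨Q1, Q2⟩ := Q
    show Θ (Matrix.of fun a b => M (a, P2) (b, Q2)) P1 Q1 = _
    rw [hY]
    simp only [Matrix.sum_apply, conj_mul_mul_apply, Fintype.sum_prod_type, tensorSnd,
      Matrix.of_apply, apply_ite, star_zero, ite_mul, zero_mul, mul_ite, mul_zero,
      Finset.sum_ite_eq, Finset.sum_ite_eq', Finset.mem_univ, if_true, Finset.sum_ite_irrel,
      Finset.sum_const_zero]
  rw [key]
  exact psd_sum _ _ fun i _ => hM.conjTranspose_mul_mul_same _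

lemma tensorId_omega (Θ : MapV n) (Aw : Matrix (Fin 1) (Fin n × Fin n) ℂ)
    (hAw : Aw = Matrix.of fun _ P => omegaVec n P) :
    tensorIdFun n Θ (Awᴴ * Aw) = Jmat Θ := by
  ext P Q
  obtain ⟨P1, P2⟩ := P; obtain ⟨Q1, Q2⟩ := Q
  show Θ (Matrix.of fun a b => (Awᴴ * Aw) (a, P2) (b, Q2)) P1 Q1
      = Θ (Matrix.single P2 Q2 1) P1 Q1
  have h : (Matrix.of fun a b => (Awᴴ * Aw) (a, P2) (b, Q2))
      = Matrix.single P2 Q2 1 := by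
    ext a b
    simp only [Matrix.mul_apply, Matrix.conjTranspose_apply, Matrix.of_apply, omegaVec, hAw,
      Matrix.single, Fin.sum_univ_one]
    rcases eq_or_ne a P2 with h1 | h1
    · rcases eq_or_ne b Q2 with h2 | h2
      · simp [h1, h2]
      · simp [h1, h2, Ne.symm h2]
    · rcases eq_or_ne b Q2 with h2 | h2
      · simp [h1, h2, Ne.symm h1]
      · simp [h1, h2, Ne.symm h1, Ne.symm h2]
  rw [h]

end Stmt11Aux3
section Stmt11Aux4

variable {n k : ℕ}

lemma exists_factorization (X : Mat n) (h : X.rank ≤ k) :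
    ∃ (C : Matrix (Fin n) (Fin k) ℂ) (D : Matrix (Fin k) (Fin n) ℂ), X = C * D := by
  classical
  set W := LinearMap.range X.mulVecLin with hW
  have hm : Module.finrank ℂ W ≤ k := h
  set m := Module.finrank ℂ W with hmdef
  let b : Module.Basis (Fin m) ℂ W := Module.finBasis ℂ W
  have hcol : ∀ a, (fun p => X p a) ∈ W := by
    intro a
    exact ⟨Pi.single a 1, by funext p; simp [Matrix.mulVecLin_apply, Matrix.mulVec_single]⟩
  set C : Matrix (Fin n) (Fin k) ℂ :=
    Matrix.of fun p j => if hj : (j : ℕ) < m then (b ⟨j, hj⟩ : Fin n → ℂ) p else 0 with hC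
  set D : Matrix (Fin k) (Fin n) ℂ :=
    Matrix.of fun j a => if hj : (j : ℕ) < m then b.repr ⟨_, hcol a⟩ ⟨j, hj⟩ else 0 with hD
  refine ⟨C, D, ?_⟩
  ext p a
  rw [Matrix.mul_apply]
  have key2 : X p a = ∑ i : Fin m, b.repr ⟨_, hcol a⟩ i * ((b i : Fin n → ℂ) p) := by
    have key := congrArg (fun w : W => (w : Fin n → ℂ) p) (b.sum_repr ⟨_, hcol a⟩).symm
    simpa [Finset.sum_apply, Pi.smul_apply, smul_eq_mul, AddSubmonoidClass.coe_finset_sum,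
      -Module.Basis.sum_repr] using key
  rw [key2]
  set F : ℕ → ℂ := fun jj => if hj : jj < m then
    b.repr ⟨_, hcol a⟩ ⟨jj, hj⟩ * ((b ⟨jj, hj⟩ : Fin n → ℂ) p) else 0 with hF
  have hsum : ∀ j : Fin k, C p j * D j a = F (j : ℕ) := by
    intro j
    by_cases hj : (j : ℕ) < m <;> simp [hC, hD, hF, hj, mul_comm]
  rw [Finset.sum_congr rfl fun j _ => hsum j]
  have hF2 : ∀ i : Fin m, b.repr ⟨_, hcol a⟩ i * ((b i : Fin n → ℂ) p) = F (i : ℕ) := by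
    intro i
    simp [hF, i.isLt]
  rw [Finset.sum_congr rfl fun i _ => hF2 i]
  rw [Fin.sum_univ_eq_sum_range, Fin.sum_univ_eq_sum_range]
  rw [show Finset.range k = Finset.range m ∪ (Finset.range k \ Finset.range m) from by
    rw [Finset.union_sdiff_of_subset (Finset.range_subset_range.mpr hm)]]
  rw [Finset.sum_union Finset.disjoint_sdiff]
  have h0 : ∑ jj ∈ Finset.range k \ Finset.range m, F jj = 0 := by
    refine Finset.sum_eq_zero fun jj hjj => ?_
    have hnot : ¬ jj < m := by
      rcases Finset.mem_sdiff.mp hjj with ⟨-, h2⟩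
      simpa using h2
    simp [hF, hnot]
  rw [h0, add_zero]

end Stmt11Aux4
section Stmt11Aux5

variable {n k : ℕ}

lemma tensorSnd_mulVec (C : Matrix (Fin n) (Fin k) ℂ) (x : Fin k × Fin n → ℂ) :
    tensorSnd C n *ᵥ x = ∑ j : Fin k, vecTens (fun p => C p j) (fun e => x (j, e)) := by
  funext P
  simp only [Matrix.mulVec, dotProduct, Fintype.sum_prod_type, tensorSnd, vecTens,
    Matrix.of_apply, ite_mul, zero_mul, mul_ite, mul_zero, Finset.sum_ite_irrel,
    Finset.sum_const_zero, Finset.sum_ite_eq, Finset.sum_ite_eq', Finset.mem_univ, if_true,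
    Finset.sum_apply]

lemma contr_tensorSnd (Φ : MapV n) (C : Matrix (Fin n) (Fin k) ℂ) (ξ : Mat n) :
    (Matrix.of fun j j' => ∑ β, ∑ ε, ξ β ε *
        ((tensorSnd C n)ᴴ * Jmat Φ * tensorSnd C n) (j, β) (j', ε)) = Cᴴ * Φ ξ * C := by
  ext j j'
  show (∑ β, ∑ ε, ξ β ε * ((tensorSnd C n)ᴴ * Jmat Φ * tensorSnd C n) (j, β) (j', ε)) = _
  rw [conj_mul_mul_apply]
  simp only [conj_mul_mul_apply, Fintype.sum_prod_type, tensorSnd, Matrix.of_apply, apply_ite,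
    star_zero, ite_mul, zero_mul, mul_ite, mul_zero, Finset.sum_ite_irrel,
    Finset.sum_const_zero, Finset.sum_ite_eq, Finset.sum_ite_eq', Finset.mem_univ, if_true,
    Finset.sum_mul, Finset.mul_sum, phi_ent Φ ξ]
  rw [sum_swap_blocks fun β ε p q =>
    ξ β ε * (star (C p j) * Jmat Φ (p, β) (q, ε) * C q j')]
  refine Finset.sum_congr rfl fun p _ => Finset.sum_congr rfl fun q _ =>
    Finset.sum_congr rfl fun β _ => Finset.sum_congr rfl fun ε _ => by ring

lemma contr_BtB {ι : Type*} [Fintype ι] (B : Matrix ι (Fin k × Fin n) ℂ) (ξ : Mat n) :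
    (Matrix.of fun j j' => ∑ β, ∑ ε, ξ β ε * (Bᴴ * B) (j, β) (j', ε))
      = ∑ r, (Matrix.of fun (β : Fin n) (j : Fin k) => B r (j, β))ᴴ * ξ *
          (Matrix.of fun (β : Fin n) (j : Fin k) => B r (j, β)) := by
  ext j j'
  show (∑ β, ∑ ε, ξ β ε * (Bᴴ * B) (j, β) (j', ε)) = _
  simp only [Matrix.sum_apply, conj_mul_mul_apply, Matrix.mul_apply,
    Matrix.conjTranspose_apply, Matrix.of_apply, Finset.sum_mul, Finset.mul_sum]
  rw [sum_comm_rot3 fun β ε r => ξ β ε * (star (B r (j, β)) * B r (j', ε))]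
  refine Finset.sum_congr rfl fun r _ => ?_
  rw [Finset.sum_comm]
  exact Finset.sum_congr rfl fun β _ => Finset.sum_congr rfl fun ε _ => by ring

lemma kraus_decomp (Φ : MapV n) (hΦ : (Jmat Φ).IsHermitian) (hbp : IsKBlockPos k (Jmat Φ))
    (X : Mat n) (hX : X.rank ≤ k) :
    ∃ Y : Fin k × Fin n → Mat n, (∀ r, (Y r).rank ≤ k) ∧
      ∀ ξ : Mat n, Xᴴ * Φ ξ * X = ∑ r, (Y r)ᴴ * ξ * Y r := by
  obtain ⟨C, D, rfl⟩ := exists_factorization X hX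
  have hpsd : ((tensorSnd C n)ᴴ * Jmat Φ * tensorSnd C n).PosSemidef := by
    refine Matrix.PosSemidef.of_dotProduct_mulVec_nonneg ?_ ?_
    · exact Matrix.isHermitian_conjTranspose_mul_mul _ hΦ
    · intro x
      rw [quad_conj, tensorSnd_mulVec]
      exact hbp _ _
  obtain ⟨B, hB⟩ := psd_eq_ct_mul_self hpsd
  refine ⟨fun r => (Matrix.of fun (β : Fin n) (j : Fin k) => B r (j, β)) * D,
    fun r => ?_, fun ξ => ?_⟩
  · refine le_trans (Matrix.rank_mul_le_left _ _) ?_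
    simpa using Matrix.rank_le_card_width (Matrix.of fun (β : Fin n) (j : Fin k) => B r (j, β))
  · show (C * D)ᴴ * Φ ξ * (C * D) = ∑ r : Fin k × Fin n,
        ((Matrix.of fun (β : Fin n) (j : Fin k) => B r (j, β)) * D)ᴴ * ξ *
        ((Matrix.of fun (β : Fin n) (j : Fin k) => B r (j, β)) * D)
    have s1 : (C * D)ᴴ * Φ ξ * (C * D) = Dᴴ * (Cᴴ * Φ ξ * C) * D := by
      simp only [Matrix.conjTranspose_mul, Matrix.mul_assoc]
    have s2 : Dᴴ * (Cᴴ * Φ ξ * C) * D = Dᴴ * (∑ r, (Matrix.of fun (β : Fin n) (j : Fin k) =>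
        B r (j, β))ᴴ * ξ * (Matrix.of fun (β : Fin n) (j : Fin k) => B r (j, β))) * D := by
      rw [← contr_BtB, ← hB, contr_tensorSnd]
    rw [s1, s2, Matrix.mul_sum, Matrix.sum_mul]
    exact Finset.sum_congr rfl fun r _ => by
      simp only [Matrix.conjTranspose_mul, Matrix.mul_assoc]

lemma two_of_bp (Φ : MapV n) (hΦ : (Jmat Φ).IsHermitian) (hbp : IsKBlockPos k (Jmat Φ)) :
    ∀ Ψ : MapV n, IsKSuperPos k Ψ → IsKSuperPos k (Ψ ∘ₗ Φ) := by
  rintro Ψ ⟨m, Xs, hrk, hK⟩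
  choose Y hY1 hY2 using fun i => kraus_decomp Φ hΦ hbp (Xs i) (hrk i)
  classical
  let e := Fintype.equivFin (Fin m × (Fin k × Fin n))
  refine ⟨Fintype.card (Fin m × (Fin k × Fin n)),
    fun t => (fun p : Fin m × (Fin k × Fin n) => Y p.1 p.2) (e.symm t),
    fun t => hY1 _ _, fun ξ => ?_⟩
  have h1 : (Ψ ∘ₗ Φ) ξ = ∑ i, (Xs i)ᴴ * Φ ξ * Xs i := by
    rw [LinearMap.comp_apply, hK]
  rw [h1]
  rw [Equiv.sum_comp e.symm (fun p : Fin m × (Fin k × Fin n) => (Y p.1 p.2)ᴴ * ξ * Y p.1 p.2)]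
  rw [Fintype.sum_prod_type]
  exact Finset.sum_congr rfl fun i _ => hY2 i ξ

end Stmt11Aux5
/-- characterization of `k`-positive maps `Φ` with `J(Φ)`
Hermitian: (1) `Φ` is `k`-positive; (2) `Ψ∘Φ` is `k`-superpositive for all
`k`-superpositive `Ψ`; (3) `Ψ∘Φ` is completely positive for all
`k`-superpositive `Ψ`; (4) `⟨ω, J(Ψ∘Φ) ω⟩ ≥ 0` for all `k`-superpositive `Ψ`. -/
theorem stmt11 (d : ℕ) (hd : 0 < d) (k : ℕ) (Φ : MapV d)
    (hΦ : (Jmat Φ).IsHermitian) :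
    List.TFAE [IsKPos k Φ,
      ∀ Ψ : MapV d, IsKSuperPos k Ψ → IsKSuperPos k (Ψ ∘ₗ Φ),
      ∀ Ψ : MapV d, IsKSuperPos k Ψ → IsCompPos (Ψ ∘ₗ Φ),
      ∀ Ψ : MapV d, IsKSuperPos k Ψ →
        0 ≤ star (omegaVec d) ⬝ᵥ (Jmat (Ψ ∘ₗ Φ)).mulVec (omegaVec d)] := by
  tfae_have 1 → 2 := fun h1 => two_of_bp Φ hΦ (bp_of_one Φ h1)
  tfae_have 2 → 3 := by
    intro h2 Ψ hΨ
    obtain ⟨m, Y, -, hY⟩ := h2 Ψ hΨ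
    exact compPos_of_kraus _ m Y hY
  tfae_have 3 → 4 := by
    intro h3 Ψ hΨ
    have hpsd := h3 Ψ hΨ d _ (Matrix.posSemidef_conjTranspose_mul_self
      (Matrix.of fun (_ : Fin 1) P => omegaVec d P))
    rw [tensorId_omega _ _ rfl] at hpsd
    exact hpsd.dotProduct_mulVec_nonneg _
  tfae_have 4 → 1 := fun h4 => one_of_bp Φ hΦ (bp_of_four Φ h4)
  tfae_finish
end

section
/- Let B be a Hermitian operator on V⊗V and let k ∈ ℕ. The following are equivalent: (1) B is k-block positive; (2) B⊙A is k-entangled for every k-entangled operator A on V⊗V; (3) B⊙A is positive semidefinite for every k-entangled operator A on V⊗V; (4) Tr(J⁻¹(B⊙A)) ≥ 0 for every k-entangled operator A on V⊗V, where the trace of a linear map Θ on L(V) is its Hilbert–Schmidt trace Σ_{α,β} (E_{αβ}|Θ(E_{αβ})) over the matrix-unit basis (E_{αβ}). -/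
open scoped ComplexOrder Kronecker
open Matrix

variable {n : ℕ}

section Lemmas
variable {d k : ℕ}

lemma jinv_apply (A : Mat2 d) (ξ : Mat d) (α β : Fin d) :
    Jinv A ξ α β = ∑ γ, ∑ δ, ξ γ δ * A (α, γ) (β, δ) := rfl

lemma odot_apply (B A : Mat2 d) (p q : Fin d × Fin d) :
    odot B A p q = ∑ γ, ∑ δ, B (p.1, γ) (q.1, δ) * A (γ, p.2) (δ, q.2) := by
  simp only [odot, Jmat, Matrix.of_apply, LinearMap.comp_apply, jinv_apply,
    Matrix.single, Matrix.of_apply, ite_and, ite_mul, one_mul, zero_mul,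
    Finset.sum_ite_irrel, Finset.sum_const_zero, Finset.sum_ite_eq, Finset.mem_univ, if_true]
  exact Finset.sum_congr rfl fun γ _ => Finset.sum_congr rfl fun δ _ => mul_comm _ _

end Lemmas
/-- The matrix `I ⊗ Wᵀ` where `W γ b = w (γ, b)`. -/
def Smat {d : ℕ} (w : Fin d × Fin d → ℂ) : Mat2 d :=
  Matrix.of fun p q => if p.1 = q.1 then w (q.2, p.2) else 0

section Lemmas2
variable {d k : ℕ}

lemma odot_gen_eq (B : Mat2 d) (w : Fin d × Fin d → ℂ) :
    odot B (Matrix.vecMulVec w (star w)) = Smat w * B * (Smat w)ᴴ := by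
  ext p q
  rw [odot_apply]
  simp only [Matrix.mul_apply, Matrix.conjTranspose_apply, Smat, Matrix.of_apply,
    Matrix.vecMulVec_apply, Pi.star_apply, Fintype.sum_prod_type, ite_mul, mul_ite,
    zero_mul, mul_zero, apply_ite (star : ℂ → ℂ), star_zero, Finset.sum_ite_irrel,
    Finset.sum_const_zero, Finset.sum_ite_eq, Finset.sum_ite_eq', Finset.mem_univ, if_true]
  simp only [Finset.sum_mul]
  rw [Finset.sum_comm]
  exact Finset.sum_congr rfl fun γ _ => Finset.sum_congr rfl fun δ _ => by ring


lemma smat_conjT_mulVec (w : Fin d × Fin d → ℂ) (z : Fin d × Fin d → ℂ) :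
    (Smat w)ᴴ *ᵥ z = fun p => ∑ b, star (w (p.2, b)) * z (p.1, b) := by
  funext p
  simp only [Matrix.mulVec, dotProduct, Matrix.conjTranspose_apply, Smat,
    Matrix.of_apply, Fintype.sum_prod_type, apply_ite (star : ℂ → ℂ), star_zero, ite_mul,
    zero_mul, Finset.sum_ite_irrel, Finset.sum_const_zero, Finset.sum_ite_eq,
    Finset.sum_ite_eq', Finset.mem_univ, if_true]


end Lemmas2

section Lemmas3
variable {d k : ℕ}

lemma quad_eq (B : Mat2 d) (w : Fin d × Fin d → ℂ) (z : Fin d × Fin d → ℂ) :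
    star z ⬝ᵥ (odot B (Matrix.vecMulVec w (star w))) *ᵥ z
      = star ((Smat w)ᴴ *ᵥ z) ⬝ᵥ B *ᵥ ((Smat w)ᴴ *ᵥ z) := by
  rw [odot_gen_eq, ← Matrix.mulVec_mulVec, ← Matrix.mulVec_mulVec,
    Matrix.star_mulVec, Matrix.conjTranspose_conjTranspose, Matrix.dotProduct_mulVec]

lemma odot_gen_isHermitian {B : Mat2 d} (hB : B.IsHermitian) (w : Fin d × Fin d → ℂ) :
    (odot B (Matrix.vecMulVec w (star w))).IsHermitian := by
  rw [odot_gen_eq]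
  unfold Matrix.IsHermitian
  rw [Matrix.conjTranspose_mul, Matrix.conjTranspose_mul,
    Matrix.conjTranspose_conjTranspose, hB.eq, mul_assoc]

end Lemmas3

section Lemmas4
variable {d k : ℕ}

lemma sdagz_decomp (u v : Fin k → (Fin d → ℂ)) (z : Fin d × Fin d → ℂ) :
    (Smat (∑ i, vecTens (u i) (v i)))ᴴ *ᵥ z
      = ∑ i, vecTens (fun a => ∑ b, star (v i b) * z (a, b)) (fun γ => star (u i γ)) := by
  rw [smat_conjT_mulVec]
  funext p
  simp only [Finset.sum_apply, vecTens, Finset.sum_mul, star_sum, StarMul.star_mul, Finset.mul_sum]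
  rw [Finset.sum_comm]
  exact Finset.sum_congr rfl fun i _ => Finset.sum_congr rfl fun b _ => by ring

lemma smat_mulVec_decomp (u v : Fin k → (Fin d → ℂ)) (x : Fin d × Fin d → ℂ) :
    Smat (∑ i, vecTens (u i) (v i)) *ᵥ x
      = ∑ i, vecTens (fun a => ∑ γ, u i γ * x (a, γ)) (v i) := by
  funext p
  simp only [Matrix.mulVec, dotProduct, Smat, Matrix.of_apply, Fintype.sum_prod_type,
    ite_mul, zero_mul, Finset.sum_ite_irrel, Finset.sum_const_zero, Finset.sum_ite_eq,
    Finset.sum_ite_eq', Finset.mem_univ, if_true, Finset.sum_apply, vecTens,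
    Finset.sum_mul, Finset.mul_sum]
  rw [Finset.sum_comm]
  exact Finset.sum_congr rfl fun i _ => Finset.sum_congr rfl fun γ _ => by ring

lemma mapTrace_jinv_eq (C : Mat2 d) :
    mapTrace (Jinv C) = star (omegaVec d) ⬝ᵥ C *ᵥ (omegaVec d) := by
  simp only [mapTrace, Matrix.trace, Matrix.diag_apply, Matrix.mul_apply,
    Matrix.conjTranspose_apply, Matrix.single, Matrix.of_apply, jinv_apply,
    apply_ite (star : ℂ → ℂ), star_zero, star_one, ite_and, ite_mul, zero_mul, one_mul,
    mul_ite, mul_zero, mul_one, Finset.sum_ite_irrel, Finset.sum_const_zero,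
    Finset.sum_ite_eq, Finset.sum_ite_eq', Finset.mem_univ, if_true,
    Matrix.mulVec, dotProduct, omegaVec, Pi.star_apply, Fintype.sum_prod_type]

end Lemmas4

/-- The generating set of the `k`-entangled cone. -/
def genSet (d k : ℕ) : Set (Mat2 d) :=
  {M : Mat2 d | ∃ u v : Fin k → (Fin d → ℂ),
    M = Matrix.vecMulVec (∑ i, vecTens (u i) (v i)) (star (∑ i, vecTens (u i) (v i)))}

lemma isKEntangled_iff {d k : ℕ} (A : Mat2 d) :
    IsKEntangled k A ↔ A ∈ convexHull ℝ (genSet d k) := Iff.rfl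

/-- `A ↦ B ⊙ A` as an `ℝ`-linear map. -/
noncomputable def odotR {d : ℕ} (B : Mat2 d) : Mat2 d →ₗ[ℝ] Mat2 d where
  toFun A := odot B A
  map_add' x y := by
    ext p q
    simp only [odot_apply, Matrix.add_apply, mul_add, Finset.sum_add_distrib]
  map_smul' r x := by
    ext p q
    simp only [odot_apply, Matrix.smul_apply, RingHom.id_apply, mul_smul_comm,
      Finset.smul_sum]

set_option maxHeartbeats 1000000 in
lemma reduction {d k : ℕ} (B : Mat2 d) {T : Set (Mat2 d)} (hT : Convex ℝ T)
    (hgen : ∀ M ∈ genSet d k, odot B M ∈ T) :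
    ∀ A : Mat2 d, IsKEntangled k A → odot B A ∈ T := by
  intro A hA
  have h1 : genSet d k ⊆ (odotR B) ⁻¹' T := fun M hM => hgen M hM
  exact convexHull_min h1 (hT.linear_preimage (odotR B)) hA

lemma convex_posSemidef {d : ℕ} : Convex ℝ {M : Mat2 d | M.PosSemidef} := by
  intro x hx y hy a b ha hb _
  refine Matrix.posSemidef_iff_dotProduct_mulVec.mpr ⟨?_, fun z => ?_⟩
  · show (a • x + b • y)ᴴ = _
    rw [Matrix.conjTranspose_add, Matrix.conjTranspose_smul, Matrix.conjTranspose_smul,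
      star_trivial, star_trivial, hx.1.eq, hy.1.eq]
  · rw [Matrix.add_mulVec, dotProduct_add, Matrix.smul_mulVec,
      Matrix.smul_mulVec, dotProduct_smul, dotProduct_smul]
    have hax : (0:ℂ) ≤ a • (star z ⬝ᵥ x *ᵥ z) := by
      rw [Complex.real_smul]
      exact mul_nonneg (by exact_mod_cast Complex.zero_le_real.mpr ha) (Matrix.PosSemidef.dotProduct_mulVec_nonneg hx z)
    have hby : (0:ℂ) ≤ b • (star z ⬝ᵥ y *ᵥ z) := by
      rw [Complex.real_smul]
      exact mul_nonneg (by exact_mod_cast Complex.zero_le_real.mpr hb) (Matrix.PosSemidef.dotProduct_mulVec_nonneg hy z)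
    exact add_nonneg hax hby

lemma gen_posSemidef {d : ℕ} (w : Fin d × Fin d → ℂ) :
    (Matrix.vecMulVec w (star w)).PosSemidef := by
  rw [Matrix.posSemidef_iff_dotProduct_mulVec]
  constructor
  · ext p q
    simp [Matrix.conjTranspose_apply, Matrix.vecMulVec_apply, mul_comm]
  · intro z
    have hmv : (Matrix.vecMulVec w (star w)) *ᵥ z = (star w ⬝ᵥ z) • w := by
      funext p
      simp only [Matrix.mulVec, dotProduct, Matrix.vecMulVec_apply, Pi.star_apply,
        Pi.smul_apply, smul_eq_mul, Finset.mul_sum, Finset.sum_mul]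
      exact Finset.sum_congr rfl fun q _ => by ring
    rw [hmv, dotProduct_smul]
    have hsz : star z ⬝ᵥ w = star (star w ⬝ᵥ z) := by
      simp only [dotProduct, star_sum, StarMul.star_mul, Pi.star_apply, star_star]
    rw [smul_eq_mul, hsz]
    exact mul_star_self_nonneg _

section Lemmas5
variable {d k : ℕ}

lemma spectral_decomp (C : Mat2 d) (hC : C.IsHermitian) :
    C = ∑ t, hC.eigenvalues t •
      Matrix.vecMulVec (⇑(hC.eigenvectorBasis t)) (star ⇑(hC.eigenvectorBasis t)) := by
  ext p q
  conv_lhs => rw [hC.spectral_theorem, Unitary.conjStarAlgAut_apply]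
  simp only [Matrix.mul_apply, Matrix.mul_diagonal, Matrix.star_apply, Function.comp_apply,
    Matrix.IsHermitian.eigenvectorUnitary_apply, Finset.sum_apply, Matrix.smul_apply,
    Matrix.vecMulVec_apply, Pi.star_apply, Matrix.sum_apply, Matrix.diagonal_apply,
    mul_ite, mul_zero, ite_mul, zero_mul, Finset.sum_ite_eq, Finset.sum_ite_eq',
    Finset.mem_univ, if_true]
  simp only [RCLike.real_smul_eq_coe_mul]
  exact Finset.sum_congr rfl fun t _ => by ring

lemma zero_mem_genSet : (0 : Mat2 d) ∈ genSet d k := by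
  refine ⟨0, 0, ?_⟩
  ext p q
  simp [vecTens, Matrix.vecMulVec_apply]

lemma smul_gen_mem (r : ℝ) (hr : 0 ≤ r) (u v : Fin k → (Fin d → ℂ)) :
    r • Matrix.vecMulVec (∑ i, vecTens (u i) (v i)) (star (∑ i, vecTens (u i) (v i)))
      ∈ genSet d k := by
  refine ⟨fun i => ((Real.sqrt r : ℝ) : ℂ) • u i, v, ?_⟩
  have hw : (∑ i, vecTens (((Real.sqrt r : ℝ) : ℂ) • u i) (v i))
      = ((Real.sqrt r : ℝ) : ℂ) • ∑ i, vecTens (u i) (v i) := by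
    funext p
    simp only [Finset.sum_apply, Pi.smul_apply, vecTens, smul_eq_mul, Finset.mul_sum]
    exact Finset.sum_congr rfl fun i _ => by ring
  rw [hw]
  ext p q
  simp only [Matrix.smul_apply, Matrix.vecMulVec_apply, Pi.star_apply, Pi.smul_apply,
    smul_eq_mul, star_mul', Complex.star_def, Complex.conj_ofReal, Complex.real_smul]
  have hc : ((Real.sqrt r : ℝ) : ℂ) * ((Real.sqrt r : ℝ) : ℂ) = ((r : ℝ) : ℂ) := by
    rw [← Complex.ofReal_mul, Real.mul_self_sqrt hr]
  rw [← hc]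
  ring

lemma smul_gen_mem' (r : ℝ) (hr : 0 ≤ r) (u v : Fin k → (Fin d → ℂ))
    (x : Fin d × Fin d → ℂ) (hx : x = ∑ i, vecTens (u i) (v i)) :
    r • Matrix.vecMulVec x (star x) ∈ genSet d k := by
  rw [hx]; exact smul_gen_mem r hr u v

end Lemmas5

section Main
variable {d k : ℕ}

lemma odot_gen_mem_entangled (hd : 0 < d) {B : Mat2 d} (hB : B.IsHermitian)
    (h1 : IsKBlockPos k B) (u v : Fin k → (Fin d → ℂ)) :
    odot B (Matrix.vecMulVec (∑ i, vecTens (u i) (v i)) (star (∑ i, vecTens (u i) (v i))))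
      ∈ convexHull ℝ (genSet d k) := by
  set w : Fin d × Fin d → ℂ := ∑ i, vecTens (u i) (v i) with hwdef
  have hpsd : (odot B (Matrix.vecMulVec w (star w))).PosSemidef := by
    refine Matrix.PosSemidef.of_dotProduct_mulVec_nonneg (odot_gen_isHermitian hB w) fun z => ?_
    rw [quad_eq, hwdef, sdagz_decomp]
    exact h1 _ _
  set N : ℕ := Fintype.card (Fin d × Fin d) with hN
  have hNpos : 0 < (N:ℝ) := by
    have : Nonempty (Fin d × Fin d) := ⟨(⟨0, hd⟩, ⟨0, hd⟩)⟩
    exact_mod_cast Fintype.card_pos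
  have hmem : ∀ t : Fin d × Fin d,
      ((N:ℝ) * hpsd.1.eigenvalues t) • Matrix.vecMulVec (⇑(hpsd.1.eigenvectorBasis t))
        (star ⇑(hpsd.1.eigenvectorBasis t)) ∈ genSet d k := by
    intro t
    rcases eq_or_lt_of_le (hpsd.eigenvalues_nonneg t) with hzero | hpos
    · rw [← hzero, mul_zero, zero_smul]
      exact zero_mem_genSet
    · have hev := hpsd.1.mulVec_eigenvectorBasis t
      have he : ⇑(hpsd.1.eigenvectorBasis t)
          = odot B (Matrix.vecMulVec w (star w)) *ᵥ (((hpsd.1.eigenvalues t)⁻¹ : ℝ) • ⇑(hpsd.1.eigenvectorBasis t)) := by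
        rw [RCLike.real_smul_eq_coe_smul (K := ℂ), Matrix.mulVec_smul, hev,
          RCLike.real_smul_eq_coe_smul (K := ℂ), smul_smul, ← RCLike.ofReal_mul,
          inv_mul_cancel₀ (ne_of_gt hpos), RCLike.ofReal_one, one_smul]
      have hstep : ∀ x : Fin d × Fin d → ℂ,
          odot B (Matrix.vecMulVec w (star w)) *ᵥ x
            = ∑ i, vecTens (fun a => ∑ γ, u i γ * (B *ᵥ ((Smat w)ᴴ *ᵥ x)) (a, γ)) (v i) := by
        intro x
        rw [odot_gen_eq, ← Matrix.mulVec_mulVec, ← Matrix.mulVec_mulVec]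
        conv_lhs => rw [hwdef]
        rw [smat_mulVec_decomp, ← hwdef]
      exact smul_gen_mem' _ (mul_nonneg hNpos.le hpos.le) _ _ _ (he.trans (hstep _))
  have hkey : odot B (Matrix.vecMulVec w (star w)) = Finset.univ.centerMass (fun _ : Fin d × Fin d => (1:ℝ))
      (fun t => ((N:ℝ) * hpsd.1.eigenvalues t) •
        Matrix.vecMulVec (⇑(hpsd.1.eigenvectorBasis t)) (star ⇑(hpsd.1.eigenvectorBasis t))) := by
    rw [Finset.centerMass]
    simp only [Finset.sum_const, Finset.card_univ, nsmul_eq_mul, mul_one, one_smul,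
      Finset.smul_sum, smul_smul]
    conv_lhs => rw [spectral_decomp _ hpsd.1]
    refine Finset.sum_congr rfl fun t _ => ?_
    congr 1
    rw [← hN]
    field_simp
  rw [hkey]
  refine Finset.centerMass_mem_convexHull _ (fun i _ => zero_le_one) ?_ (fun t _ => ?_)
  · simp only [Finset.sum_const, Finset.card_univ, nsmul_eq_mul, mul_one]
    exact hNpos
  · exact hmem t

end Main

/-- characterization of `k`-block positive Hermitian operators
`B`: (1) `B` is `k`-block positive; (2) `B⊙A` is `k`-entangled for every
`k`-entangled `A`; (3) `B⊙A` is positive semidefinite for every `k`-entangled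
`A`; (4) `Tr(J⁻¹(B⊙A)) ≥ 0` for every `k`-entangled `A`. -/
theorem stmt13 (d : ℕ) (hd : 0 < d) (k : ℕ) (B : Mat2 d) (hB : B.IsHermitian) :
    List.TFAE [IsKBlockPos k B,
      ∀ A : Mat2 d, IsKEntangled k A → IsKEntangled k (odot B A),
      ∀ A : Mat2 d, IsKEntangled k A → (odot B A).PosSemidef,
      ∀ A : Mat2 d, IsKEntangled k A → 0 ≤ mapTrace (Jinv (odot B A))] := by
  tfae_have 1 → 2 := by
    intro h1 A hA
    rw [isKEntangled_iff]
    refine reduction B (convex_convexHull ℝ (genSet d k)) ?_ A hA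
    rintro M ⟨u, v, rfl⟩
    exact odot_gen_mem_entangled hd hB h1 u v
  tfae_have 2 → 3 := by
    intro h2 A hA
    have hE := h2 A hA
    rw [isKEntangled_iff] at hE
    have hsub : genSet d k ⊆ {M : Mat2 d | M.PosSemidef} := by
      rintro M ⟨u, v, rfl⟩
      exact gen_posSemidef _
    exact convexHull_min hsub convex_posSemidef hE
  tfae_have 3 → 4 := by
    intro h3 A hA
    rw [mapTrace_jinv_eq]
    exact (h3 A hA).dotProduct_mulVec_nonneg _
  tfae_have 4 → 1 := by
    intro h4 u v
    set u' : Fin k → (Fin d → ℂ) := fun i b => star (v i b) with hu'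
    set v' : Fin k → (Fin d → ℂ) := fun i γ => star (u i γ) with hv'
    have hmem : IsKEntangled k (Matrix.vecMulVec (∑ i, vecTens (u' i) (v' i))
        (star (∑ i, vecTens (u' i) (v' i)))) :=
      subset_convexHull ℝ _ ⟨u', v', rfl⟩
    have h := h4 _ hmem
    rw [mapTrace_jinv_eq, quad_eq, sdagz_decomp] at h
    have hz : (∑ i, vecTens (fun a => ∑ b, star (v' i b) * omegaVec d (a, b))
        (fun γ => star (u' i γ))) = ∑ i, vecTens (u i) (v i) := by
      refine Finset.sum_congr rfl fun i _ => ?_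
      have h1 : (fun a => ∑ b, star (v' i b) * omegaVec d (a, b)) = u i := by
        funext a
        simp [hv', omegaVec, star_star, mul_ite, mul_one, mul_zero]
      have h2 : (fun γ => star (u' i γ)) = v i := by
        funext γ
        simp [hu', star_star]
      rw [h1, h2]
    rw [hz] at h
    exact h
  tfae_finish
end

section
/- Let d ≥ 2 and V = ℂ^d, and let υ_1,…,υ_n ∈ V and u_1,…,u_m ∈ V be arbitrary finite families of vectors. Then there exists a Hermitian operator A on V⊗V which is not block positive, yet the block (⟨υ_i|⊗id) A (|υ_i⟩⊗id) is a positive semidefinite operator on V for every i = 1,…,n and the block (id⊗⟨u_j|) A (id⊗|u_j⟩) is a positive semidefinite operator on V for every j = 1,…,m. -/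
open scoped ComplexOrder Kronecker
open Matrix

variable {n : ℕ}

lemma aux_cs {I : Type*} [Fintype I] (x y : I → ℂ) :
    Complex.normSq (star x ⬝ᵥ y) ≤ (∑ i, Complex.normSq (x i)) * (∑ i, Complex.normSq (y i)) := by
  have hre : ∀ z : I → ℂ, RCLike.re (star z ⬝ᵥ z : ℂ) = ∑ i, Complex.normSq (z i) := by
    intro z
    simp [dotProduct, Complex.normSq_apply, Complex.mul_re, Pi.star_apply]
  have h := @inner_mul_inner_self_le ℂ (EuclideanSpace ℂ I) _ _ _
    (WithLp.toLp 2 x) (WithLp.toLp 2 y)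
  rw [EuclideanSpace.inner_toLp_toLp, EuclideanSpace.inner_toLp_toLp,
    EuclideanSpace.inner_toLp_toLp, EuclideanSpace.inner_toLp_toLp,
    dotProduct_comm y (star x), dotProduct_comm x (star y), dotProduct_comm x (star x),
    dotProduct_comm y (star y)] at h
  rw [hre, hre] at h
  have hnorm : ‖(star y ⬝ᵥ x : ℂ)‖ = ‖(star x ⬝ᵥ y : ℂ)‖ := by
    have : (star y ⬝ᵥ x : ℂ) = star (star x ⬝ᵥ y : ℂ) := by
      simp [dotProduct, Finset.sum_comm, mul_comm]
    rw [this, norm_star]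
  rw [hnorm] at h
  calc Complex.normSq (star x ⬝ᵥ y) = ‖(star x ⬝ᵥ y : ℂ)‖ * ‖(star x ⬝ᵥ y : ℂ)‖ := by
        rw [Complex.normSq_eq_norm_sq, sq]
    _ ≤ _ := h

lemma aux_sum {I : Type*} [Fintype I] [DecidableEq I] (a s : ℝ) (g : I → ℝ) (x : I → ℂ) :
    ∑ β, ∑ δ, (starRingEnd ℂ) (x β) *
        ((a * (if β = δ then (1:ℝ) else 0) - s * (g β * g δ) : ℝ) : ℂ) * x δ
    = ((a * ∑ i, Complex.normSq (x i) - s * Complex.normSq (∑ i, (g i : ℂ) * x i) : ℝ) : ℂ) := by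
  have expand : ∑ β, ∑ δ, (starRingEnd ℂ) (x β) *
        ((a * (if β = δ then (1:ℝ) else 0) - s * (g β * g δ) : ℝ) : ℂ) * x δ
      = ∑ β, ∑ δ, ((if β = δ then (a:ℂ) * ((starRingEnd ℂ) (x β) * x δ) else 0)
          - (s:ℂ) * (((g β : ℂ) * (starRingEnd ℂ) (x β)) * ((g δ : ℂ) * x δ))) := by
    refine Finset.sum_congr rfl fun β _ => Finset.sum_congr rfl fun δ _ => ?_
    push_cast [apply_ite Complex.ofReal]
    split <;> ring
  rw [expand]
  simp only [Finset.sum_sub_distrib, Finset.sum_ite_eq, Finset.mem_univ, if_true]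
  simp only [← Finset.mul_sum]
  rw [← Finset.sum_mul]
  have h1 : ((∑ i, Complex.normSq (x i) : ℝ) : ℂ) = ∑ i, (starRingEnd ℂ) (x i) * x i := by
    push_cast
    exact Finset.sum_congr rfl fun i _ => by rw [← Complex.normSq_eq_conj_mul_self]
  have h2 : ((Complex.normSq (∑ i, (g i : ℂ) * x i) : ℝ) : ℂ)
      = (∑ i, (g i : ℂ) * (starRingEnd ℂ) (x i)) * (∑ i, (g i : ℂ) * x i) := by
    rw [Complex.normSq_eq_conj_mul_self, map_sum]
    congr 1
    exact Finset.sum_congr rfl fun i _ => by rw [_root_.map_mul, Complex.conj_ofReal]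
  push_cast [h1, h2]
  ring

lemma aux_quad {I : Type*} [Fintype I] [DecidableEq I] (a s : ℝ) (g : I → ℝ) (x : I → ℂ) :
    star x ⬝ᵥ (Matrix.of fun β δ : I =>
        ((a * (if β = δ then (1:ℝ) else 0) - s * (g β * g δ) : ℝ) : ℂ)).mulVec x
    = ((a * ∑ i, Complex.normSq (x i) - s * Complex.normSq (∑ i, (g i : ℂ) * x i) : ℝ) : ℂ) := by
  rw [← aux_sum a s g x]
  simp only [dotProduct, Matrix.mulVec, Matrix.of_apply, Pi.star_apply,
    Complex.star_def, Finset.mul_sum]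
  exact Finset.sum_congr rfl fun β _ => Finset.sum_congr rfl fun δ _ => by ring

lemma aux_herm {I : Type*} [Fintype I] [DecidableEq I] (a s : ℝ) (g : I → ℝ) :
    (Matrix.of fun β δ : I =>
      ((a * (if β = δ then (1:ℝ) else 0) - s * (g β * g δ) : ℝ) : ℂ)).IsHermitian := by
  ext β δ
  simp only [Matrix.conjTranspose_apply, Matrix.of_apply, Complex.star_def, Complex.conj_ofReal]
  norm_cast
  by_cases h : β = δ
  · subst h; ring
  · rw [if_neg h, if_neg fun hh => h hh.symm]; ring

lemma aux_psd {I : Type*} [Fintype I] [DecidableEq I] (a s : ℝ) (g : I → ℝ)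
    (hs : 0 ≤ s) (hle : s * (∑ i, g i * g i) ≤ a) :
    (Matrix.of fun β δ : I =>
      ((a * (if β = δ then (1:ℝ) else 0) - s * (g β * g δ) : ℝ) : ℂ)).PosSemidef := by
  refine Matrix.PosSemidef.of_dotProduct_mulVec_nonneg (aux_herm a s g) fun x => ?_
  rw [aux_quad]
  rw [Complex.zero_le_real]
  have hcs : Complex.normSq (∑ i, (g i : ℂ) * x i)
      ≤ (∑ i, g i * g i) * (∑ i, Complex.normSq (x i)) := by
    have h := aux_cs (fun i => (g i : ℂ)) x
    have e1 : star (fun i => (g i : ℂ)) ⬝ᵥ x = ∑ i, (g i : ℂ) * x i := by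
      simp [dotProduct, Pi.star_apply, Complex.conj_ofReal]
    have e2 : (∑ i, Complex.normSq ((g i : ℂ))) = ∑ i, g i * g i := by
      simp [Complex.normSq_ofReal]
    rw [e1, e2] at h
    exact h
  have hx : 0 ≤ ∑ i, Complex.normSq (x i) :=
    Finset.sum_nonneg fun i _ => Complex.normSq_nonneg _
  nlinarith [mul_le_mul_of_nonneg_left hcs hs]

lemma aux_split {I : Type*} [Fintype I] [DecidableEq I] {M : Type*} [AddCommMonoid M]
    {i0 i1 : I} (h : i0 ≠ i1) (f : I → M) :
    ∑ α, f α = f i0 + (f i1 + ∑ α ∈ (Finset.univ.erase i0).erase i1, f α) := by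
  rw [← Finset.add_sum_erase _ f (Finset.mem_univ i0),
    ← Finset.add_sum_erase _ f (Finset.mem_erase.2 ⟨h.symm, Finset.mem_univ i1⟩),
    Finset.erase_right_comm]

lemma aux_blockFst {d : ℕ} (ε : ℝ) (w : Fin d → ℝ) (υ : Fin d → ℂ) :
    blockFst (Matrix.of fun p q : Fin d × Fin d =>
      ((ε * (if p = q then 1 else 0) - 1 * ((w p.1 * w p.2) * (w q.1 * w q.2)) : ℝ) : ℂ)) υ
    = Matrix.of fun β δ => (((ε * ∑ α, Complex.normSq (υ α)) * (if β = δ then (1:ℝ) else 0)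
        - Complex.normSq (∑ γ, (w γ : ℂ) * υ γ) * (w β * w δ) : ℝ) : ℂ) := by
  ext β δ
  simp only [blockFst, Matrix.of_apply, Complex.star_def]
  by_cases hβδ : β = δ
  · subst hβδ
    have he : ∀ α γ : Fin d,
        ((ε * (if (α, β) = (γ, β) then 1 else 0) - 1 * ((w α * w β) * (w γ * w β)) : ℝ) : ℂ)
        = ((ε * (if α = γ then 1 else 0) - (w β * w β) * (w α * w γ) : ℝ) : ℂ) := by
      intro α γ
      norm_cast
      by_cases h : α = γ <;> simp [Prod.ext_iff, h] <;> ring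
    rw [Finset.sum_congr rfl fun α _ => Finset.sum_congr rfl fun γ _ => by rw [he α γ]]
    rw [aux_sum ε (w β * w β) w υ]
    norm_cast
    simp
    ring
  · have he : ∀ α γ : Fin d,
        ((ε * (if (α, β) = (γ, δ) then 1 else 0) - 1 * ((w α * w β) * (w γ * w δ)) : ℝ) : ℂ)
        = (((0:ℝ) * (if α = γ then 1 else 0) - (w β * w δ) * (w α * w γ) : ℝ) : ℂ) := by
      intro α γ
      norm_cast
      by_cases h : α = γ <;> simp [Prod.ext_iff, hβδ, h] <;> ring
    rw [Finset.sum_congr rfl fun α _ => Finset.sum_congr rfl fun γ _ => by rw [he α γ]]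
    rw [aux_sum 0 (w β * w δ) w υ]
    rw [if_neg hβδ]
    norm_cast
    ring

lemma aux_blockSnd {d : ℕ} (ε : ℝ) (w : Fin d → ℝ) (u : Fin d → ℂ) :
    blockSnd (Matrix.of fun p q : Fin d × Fin d =>
      ((ε * (if p = q then 1 else 0) - 1 * ((w p.1 * w p.2) * (w q.1 * w q.2)) : ℝ) : ℂ)) u
    = Matrix.of fun α γ => (((ε * ∑ β, Complex.normSq (u β)) * (if α = γ then (1:ℝ) else 0)
        - Complex.normSq (∑ δ, (w δ : ℂ) * u δ) * (w α * w γ) : ℝ) : ℂ) := by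
  ext α γ
  simp only [blockSnd, Matrix.of_apply, Complex.star_def]
  by_cases hαγ : α = γ
  · subst hαγ
    have he : ∀ β δ : Fin d,
        ((ε * (if (α, β) = (α, δ) then 1 else 0) - 1 * ((w α * w β) * (w α * w δ)) : ℝ) : ℂ)
        = ((ε * (if β = δ then 1 else 0) - (w α * w α) * (w β * w δ) : ℝ) : ℂ) := by
      intro β δ
      norm_cast
      by_cases h : β = δ <;> simp [Prod.ext_iff, h] <;> ring
    rw [Finset.sum_congr rfl fun β _ => Finset.sum_congr rfl fun δ _ => by rw [he β δ]]
    rw [aux_sum ε (w α * w α) w u]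
    norm_cast
    simp
    ring
  · have he : ∀ β δ : Fin d,
        ((ε * (if (α, β) = (γ, δ) then 1 else 0) - 1 * ((w α * w β) * (w γ * w δ)) : ℝ) : ℂ)
        = (((0:ℝ) * (if β = δ then 1 else 0) - (w α * w γ) * (w β * w δ) : ℝ) : ℂ) := by
      intro β δ
      norm_cast
      by_cases h : β = δ <;> simp [Prod.ext_iff, hαγ, h] <;> ring
    rw [Finset.sum_congr rfl fun β _ => Finset.sum_congr rfl fun δ _ => by rw [he β δ]]
    rw [aux_sum 0 (w α * w γ) w u]
    rw [if_neg hαγ]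
    norm_cast
    ring

/-- for any finite families `υ_1,…,υ_n` and `u_1,…,u_m` of vectors
in `V = ℂ^d` (`d ≥ 2`), there is a Hermitian operator `A` on `V ⊗ V` which is
not block positive although all the blocks `(⟨υ_i|⊗id) A (|υ_i⟩⊗id)` and
`(id⊗⟨u_j|) A (id⊗|u_j⟩)` are positive semidefinite. -/
theorem stmt15 (d : ℕ) (hd : 2 ≤ d) (n m : ℕ)
    (υ : Fin n → (Fin d → ℂ)) (u : Fin m → (Fin d → ℂ)) :
    ∃ A : Mat2 d, A.IsHermitian ∧
      ¬ (∀ x y : Fin d → ℂ, 0 ≤ star (vecTens x y) ⬝ᵥ A.mulVec (vecTens x y)) ∧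
      (∀ i, (blockFst A (υ i)).PosSemidef) ∧
      (∀ j, (blockSnd A (u j)).PosSemidef) := by
  set i0 : Fin d := ⟨0, by omega⟩ with hi0
  set i1 : Fin d := ⟨1, by omega⟩ with hi1
  have h01 : i0 ≠ i1 := by simp [hi0, hi1, Fin.ext_iff]
  obtain ⟨t, ht⟩ := Infinite.exists_notMem_finset
    ((Finset.univ.image fun i => ((υ i i1) / (υ i i0)).re) ∪
     (Finset.univ.image fun j => ((u j i1) / (u j i0)).re))
  set w : Fin d → ℝ := fun α => if α = i0 then 1 else if α = i1 then t else 0 with hwdef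
  set N : ℝ := 1 + t * t with hNdef
  have hN0 : 0 < N := by nlinarith [sq_nonneg t]
  have hNsum : ∑ α, w α * w α = N := by
    rw [aux_split h01 (fun α => w α * w α)]
    have h0 : w i0 = 1 := by simp [hwdef]
    have h1 : w i1 = t := by simp [hwdef, h01.symm]
    rw [h0, h1, Finset.sum_eq_zero, hNdef]
    · ring
    · intro α hα
      rw [Finset.mem_erase, Finset.mem_erase] at hα
      simp [hwdef, hα.1, hα.2.1]
  have hcval : ∀ v : Fin d → ℂ, (∑ γ, (w γ : ℂ) * v γ) = v i0 + (t:ℂ) * v i1 := by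
    intro v
    rw [aux_split h01 (fun γ => (w γ : ℂ) * v γ)]
    have h0 : w i0 = 1 := by simp [hwdef]
    have h1 : w i1 = t := by simp [hwdef, h01.symm]
    rw [h0, h1, Finset.sum_eq_zero]
    · push_cast; ring
    · intro α hα
      rw [Finset.mem_erase, Finset.mem_erase] at hα
      simp [hwdef, hα.1, hα.2.1]
  -- strict Cauchy-Schwarz for non-proportional vectors
  have hstrict : ∀ v : Fin d → ℂ, v ≠ 0 → ((v i1) / (v i0)).re ≠ t →
      Complex.normSq (∑ γ, (w γ : ℂ) * v γ) < N * ∑ α, Complex.normSq (v α) := by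
    intro v hv hbad
    have hkey : ∀ a b : ℂ, N * (Complex.normSq a + Complex.normSq b)
        = Complex.normSq (a + (t:ℂ) * b) + Complex.normSq ((t:ℂ) * a - b) := by
      intro a b
      rw [hNdef]
      simp only [Complex.normSq_apply, Complex.add_re, Complex.add_im, Complex.sub_re,
        Complex.sub_im, Complex.mul_re, Complex.mul_im, Complex.ofReal_re, Complex.ofReal_im]
      ring
    rw [hcval v, aux_split h01 (fun α => Complex.normSq (v α))]
    set R := ∑ α ∈ (Finset.univ.erase i0).erase i1, Complex.normSq (v α) with hRdef
    have hR : 0 ≤ R := Finset.sum_nonneg fun _ _ => Complex.normSq_nonneg _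
    have hk := hkey (v i0) (v i1)
    by_cases hz : (t:ℂ) * v i0 - v i1 = 0
    · have hb : v i1 = (t:ℂ) * v i0 := by
        have := sub_eq_zero.mp hz; exact this.symm
      by_cases ha : v i0 = 0
      · have hb0 : v i1 = 0 := by rw [hb, ha, mul_zero]
        obtain ⟨α, hα⟩ := Function.ne_iff.mp hv
        have hαmem : α ∈ (Finset.univ.erase i0).erase i1 := by
          rw [Finset.mem_erase, Finset.mem_erase]
          refine ⟨fun h => hα (by rw [h]; exact hb0), fun h => hα (by rw [h]; exact ha),
            Finset.mem_univ α⟩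
        have hRp : 0 < R := by
          have := Finset.single_le_sum (f := fun α => Complex.normSq (v α))
            (fun i _ => Complex.normSq_nonneg _) hαmem
          have hpos : 0 < Complex.normSq (v α) := Complex.normSq_pos.mpr hα
          linarith
        nlinarith [Complex.normSq_nonneg ((t:ℂ) * v i0 - v i1)]
      · exfalso
        apply hbad
        rw [hb, mul_div_assoc, div_self ha, mul_one, Complex.ofReal_re]
    · have hzp : 0 < Complex.normSq ((t:ℂ) * v i0 - v i1) := Complex.normSq_pos.mpr hz
      nlinarith
  -- ratios and the choice of ε
  have hratio : ∀ v : Fin d → ℂ, ((v i1) / (v i0)).re ≠ t →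
      Complex.normSq (∑ γ, (w γ : ℂ) * v γ) * N / (∑ α, Complex.normSq (v α)) < N * N := by
    intro v hbad
    by_cases hv : v = 0
    · subst hv
      simp only [Pi.zero_apply, mul_zero, Finset.sum_const_zero, Complex.normSq_zero,
        zero_mul, zero_div]
      positivity
    · have hpos : 0 < ∑ α, Complex.normSq (v α) := by
        obtain ⟨α, hα⟩ := Function.ne_iff.mp hv
        have := Finset.single_le_sum (f := fun α => Complex.normSq (v α))
          (fun i _ => Complex.normSq_nonneg _) (Finset.mem_univ α)
        have := Complex.normSq_pos.mpr hα
        linarith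
      have hs := hstrict v hv hbad
      rw [div_lt_iff₀ hpos]
      nlinarith
  set S : Finset ℝ := insert (N * N / 2)
    ((Finset.univ.image fun i =>
        Complex.normSq (∑ γ, (w γ : ℂ) * υ i γ) * N / (∑ α, Complex.normSq (υ i α))) ∪
     (Finset.univ.image fun j =>
        Complex.normSq (∑ γ, (w γ : ℂ) * u j γ) * N / (∑ α, Complex.normSq (u j α)))) with hSdef
  have hSne : (N * N / 2) ∈ S := Finset.mem_insert_self _ _
  set ε : ℝ := S.max' ⟨_, hSne⟩ with hεdef
  have hεlt : ε < N * N := by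
    rw [hεdef]
    refine (Finset.max'_lt_iff _ _).mpr ?_
    intro b hb
    rw [hSdef, Finset.mem_insert, Finset.mem_union] at hb
    rcases hb with hb | hb | hb
    · rw [hb]; nlinarith
    · obtain ⟨i, _, hb⟩ := Finset.mem_image.mp hb
      rw [← hb]
      exact hratio (υ i) fun hc =>
        ht (Finset.mem_union_left _ (Finset.mem_image.mpr ⟨i, Finset.mem_univ i, hc⟩))
    · obtain ⟨j, _, hb⟩ := Finset.mem_image.mp hb
      rw [← hb]
      exact hratio (u j) fun hc =>
        ht (Finset.mem_union_right _ (Finset.mem_image.mpr ⟨j, Finset.mem_univ j, hc⟩))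
  have hεub : ∀ v : Fin d → ℂ,
      (Complex.normSq (∑ γ, (w γ : ℂ) * v γ) * N / (∑ α, Complex.normSq (v α))) ∈ S →
      Complex.normSq (∑ γ, (w γ : ℂ) * v γ) * N ≤ ε * ∑ α, Complex.normSq (v α) := by
    intro v hmem
    by_cases hv : v = 0
    · subst hv
      simp
    · have hpos : 0 < ∑ α, Complex.normSq (v α) := by
        obtain ⟨α, hα⟩ := Function.ne_iff.mp hv
        have := Finset.single_le_sum (f := fun α => Complex.normSq (v α))
          (fun i _ => Complex.normSq_nonneg _) (Finset.mem_univ α)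
        have := Complex.normSq_pos.mpr hα
        linarith
      have hle := Finset.le_max' S _ hmem
      rw [div_le_iff₀ hpos] at hle
      rw [hεdef]
      linarith
  -- the operator A
  set g2 : Fin d × Fin d → ℝ := fun p => w p.1 * w p.2 with hg2
  refine ⟨Matrix.of fun p q : Fin d × Fin d =>
      ((ε * (if p = q then 1 else 0) - 1 * ((w p.1 * w p.2) * (w q.1 * w q.2)) : ℝ) : ℂ),
    ?_, ?_, ?_, ?_⟩
  · exact aux_herm ε 1 g2
  · intro hbp
    have hvt : vecTens (fun α => (w α : ℂ)) (fun α => (w α : ℂ))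
        = fun p : Fin d × Fin d => ((g2 p : ℝ) : ℂ) := by
      funext p
      simp only [vecTens, hg2]
      push_cast
      ring
    have hb := hbp (fun α => (w α : ℂ)) (fun α => (w α : ℂ))
    rw [hvt] at hb
    have hq := aux_quad ε 1 g2 (fun p => ((g2 p : ℝ) : ℂ))
    have he1 : ∀ p q : Fin d × Fin d,
        ((ε * (if p = q then 1 else 0) - 1 * ((w p.1 * w p.2) * (w q.1 * w q.2)) : ℝ) : ℂ)
        = ((ε * (if p = q then 1 else 0) - 1 * (g2 p * g2 q) : ℝ) : ℂ) := by
      intro p q; rw [hg2]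
    have hsum1 : ∑ p : Fin d × Fin d, Complex.normSq ((g2 p : ℂ)) = N * N := by
      simp only [Complex.normSq_ofReal, hg2]
      rw [Fintype.sum_prod_type, ← hNsum, Finset.sum_mul_sum]
      exact Finset.sum_congr rfl fun a _ => Finset.sum_congr rfl fun b _ => by ring
    have hsum2 : Complex.normSq (∑ p : Fin d × Fin d, ((g2 p : ℝ) : ℂ) * ((g2 p : ℝ) : ℂ))
        = (N * N) * (N * N) := by
      have hr : ∑ p : Fin d × Fin d, g2 p * g2 p = N * N := by
        rw [← hsum1]
        simp [Complex.normSq_ofReal]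
      have : (∑ p : Fin d × Fin d, ((g2 p : ℝ) : ℂ) * ((g2 p : ℝ) : ℂ))
          = ((N * N : ℝ) : ℂ) := by
        rw [← hr]
        push_cast
        rfl
      rw [this, Complex.normSq_ofReal]
    rw [hq, hsum1, hsum2] at hb
    rw [Complex.zero_le_real] at hb
    nlinarith [mul_pos hN0 hN0, mul_lt_mul_of_pos_right hεlt (mul_pos hN0 hN0)]
  · intro i
    rw [aux_blockFst]
    refine aux_psd _ _ w (Complex.normSq_nonneg _) ?_
    rw [hNsum]
    exact hεub (υ i) (Finset.mem_insert_of_mem (Finset.mem_union_left _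
      (Finset.mem_image_of_mem _ (Finset.mem_univ i))))
  · intro j
    rw [aux_blockSnd]
    refine aux_psd _ _ w (Complex.normSq_nonneg _) ?_
    rw [hNsum]
    exact hεub (u j) (Finset.mem_insert_of_mem (Finset.mem_union_right _
      (Finset.mem_image_of_mem _ (Finset.mem_univ j))))
end

section
/- Let X = ℝ^d and let A be a self-adjoint linear operator on X⊗X with matrix elements A_{ab,cd} in an orthonormal product basis, satisfying the partial transpose symmetry (id⊗t)A = A, where t is transposition on L(X) with respect to the chosen orthonormal basis. Then the real polynomial p(x,y) = Σ_{a,b,c,d} A_{ab,cd} x^a y^b x^c y^d in the variables x^1,…,x^d, y^1,…,y^d is a sum of squares of real polynomials if and only if A = B + (id⊗t)B for some positive semidefinite operator B on X⊗X. -/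
open scoped ComplexOrder Kronecker
open Matrix

variable {n : ℕ}

/-! ### Auxiliary machinery for `stmt16` -/

section Stmt16Aux

open MvPolynomial Finset

variable {d : ℕ}

lemma quartic_flat (M : RMat2 d) : quarticPoly M =
    ∑ p : (Fin d × Fin d) × (Fin d × Fin d),
      MvPolynomial.C (M p.1 p.2) * MvPolynomial.X (Sum.inl p.1.1) *
        MvPolynomial.X (Sum.inr p.1.2) * MvPolynomial.X (Sum.inl p.2.1) *
        MvPolynomial.X (Sum.inr p.2.2) := by
  simp [quarticPoly, Fintype.sum_prod_type]

lemma quartic_add (M N : RMat2 d) :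
    quarticPoly (M + N) = quarticPoly M + quarticPoly N := by
  simp [quarticPoly, Matrix.add_apply, _root_.map_add, add_mul, Finset.sum_add_distrib]

lemma quartic_neg (M : RMat2 d) : quarticPoly (-M) = - quarticPoly M := by
  simp [quarticPoly, Matrix.neg_apply, _root_.map_neg, neg_mul, Finset.sum_neg_distrib]

lemma quartic_zero : quarticPoly (0 : RMat2 d) = 0 := by
  simp [quarticPoly]

lemma quartic_sub (M N : RMat2 d) :
    quarticPoly (M - N) = quarticPoly M - quarticPoly N := by
  rw [sub_eq_add_neg, quartic_add, quartic_neg, sub_eq_add_neg]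

lemma quartic_sum {ι : Type*} (s : Finset ι) (M : ι → RMat2 d) :
    quarticPoly (∑ i ∈ s, M i) = ∑ i ∈ s, quarticPoly (M i) := by
  classical
  induction s using Finset.induction with
  | empty => simp [quartic_zero]
  | insert _ _ h ih => simp [Finset.sum_insert h, quartic_add, ih]

def swapE : ((Fin d × Fin d) × (Fin d × Fin d)) ≃ ((Fin d × Fin d) × (Fin d × Fin d)) where
  toFun p := ((p.1.1, p.2.2), (p.2.1, p.1.2))
  invFun p := ((p.1.1, p.2.2), (p.2.1, p.1.2))
  left_inv _ := rfl
  right_inv _ := rfl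

lemma quartic_ptrans (M : RMat2 d) : quarticPoly (ptrans M) = quarticPoly M := by
  rw [quartic_flat, quartic_flat]
  refine Fintype.sum_equiv swapE _ _ ?_
  rintro ⟨⟨a, b⟩, c, e⟩
  simp only [ptrans, Matrix.of_apply, swapE, Equiv.coe_fn_mk]
  ring

/-- Quadri-linear form attached to `M`. -/
def Sform (M : RMat2 d) (x y x' y' : Fin d → ℝ) : ℝ :=
  ∑ p : (Fin d × Fin d) × (Fin d × Fin d),
    M p.1 p.2 * x p.1.1 * y p.1.2 * x' p.2.1 * y' p.2.2

lemma Sform_eval (M : RMat2 d) (z : (Fin d ⊕ Fin d) → ℝ) :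
    MvPolynomial.eval z (quarticPoly M) =
      Sform M (z ∘ Sum.inl) (z ∘ Sum.inr) (z ∘ Sum.inl) (z ∘ Sum.inr) := by
  simp [quarticPoly, Sform, Fintype.sum_prod_type, Function.comp]

lemma Sform_diag_zero (M : RMat2 d) (hq : quarticPoly M = 0) (x y : Fin d → ℝ) :
    Sform M x y x y = 0 := by
  have := congrArg (MvPolynomial.eval (Sum.elim x y)) hq
  rw [Sform_eval] at this
  simpa using this

lemma Sform_add1 (M : RMat2 d) (x x'' y x' y' : Fin d → ℝ) :
    Sform M (fun a => x a + x'' a) y x' y' = Sform M x y x' y' + Sform M x'' y x' y' := by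
  unfold Sform
  rw [← Finset.sum_add_distrib]
  exact Finset.sum_congr rfl fun p _ => by ring

lemma Sform_add2 (M : RMat2 d) (x y y'' x' y' : Fin d → ℝ) :
    Sform M x (fun a => y a + y'' a) x' y' = Sform M x y x' y' + Sform M x y'' x' y' := by
  unfold Sform
  rw [← Finset.sum_add_distrib]
  exact Finset.sum_congr rfl fun p _ => by ring

lemma Sform_add3 (M : RMat2 d) (x y x' x'' y' : Fin d → ℝ) :
    Sform M x y (fun a => x' a + x'' a) y' = Sform M x y x' y' + Sform M x y x'' y' := by
  unfold Sform
  rw [← Finset.sum_add_distrib]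
  exact Finset.sum_congr rfl fun p _ => by ring

lemma Sform_add4 (M : RMat2 d) (x y x' y' y'' : Fin d → ℝ) :
    Sform M x y x' (fun a => y' a + y'' a) = Sform M x y x' y' + Sform M x y x' y'' := by
  unfold Sform
  rw [← Finset.sum_add_distrib]
  exact Finset.sum_congr rfl fun p _ => by ring

lemma Sform_polar1 (M : RMat2 d) (hq : quarticPoly M = 0) (u u' y : Fin d → ℝ) :
    Sform M u y u' y + Sform M u' y u y = 0 := by
  have h := Sform_diag_zero M hq (fun a => u a + u' a) y
  rw [Sform_add1, Sform_add3, Sform_add3] at h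
  have h1 := Sform_diag_zero M hq u y
  have h2 := Sform_diag_zero M hq u' y
  linarith

lemma Sform_polar2 (M : RMat2 d) (hq : quarticPoly M = 0) (u u' v v' : Fin d → ℝ) :
    Sform M u v u' v' + Sform M u v' u' v + Sform M u' v u v' + Sform M u' v' u v = 0 := by
  have h := Sform_polar1 M hq u u' (fun a => v a + v' a)
  rw [Sform_add2, Sform_add4, Sform_add4, Sform_add2, Sform_add4, Sform_add4] at h
  have h1 := Sform_polar1 M hq u u' v
  have h2 := Sform_polar1 M hq u u' v'
  linarith

/-- delta vector -/
def dvec (a : Fin d) : Fin d → ℝ := fun i => if a = i then 1 else 0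

lemma Sform_delta (M : RMat2 d) (a b c e : Fin d) :
    Sform M (dvec a) (dvec b) (dvec c) (dvec e) = M (a, b) (c, e) := by
  unfold Sform
  rw [Finset.sum_eq_single ((a, b), (c, e))]
  · simp [dvec]
  · rintro ⟨⟨a', b'⟩, c', e'⟩ _ hne
    by_cases h1 : a = a'
    · by_cases h2 : b = b'
      · by_cases h3 : c = c'
        · by_cases h4 : e = e'
          · exfalso; apply hne; subst h1 h2 h3 h4; rfl
          · simp [dvec, h4]
        · simp [dvec, h3]
      · simp [dvec, h2]
    · simp [dvec, h1]
  · simp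

/-- Key injectivity: a fully symmetrized matrix with zero quartic polynomial is zero. -/
lemma quartic_inj (M : RMat2 d) (hs : M.IsSymm) (hp : ptrans M = M)
    (hq : quarticPoly M = 0) : M = 0 := by
  ext ⟨a, b⟩ ⟨c, e⟩
  have h := Sform_polar2 M hq (dvec a) (dvec c) (dvec b) (dvec e)
  rw [Sform_delta, Sform_delta, Sform_delta, Sform_delta] at h
  have e1 : M (a, e) (c, b) = M (a, b) (c, e) := by
    have h0 : M (a, e) (c, b) = ptrans M (a, b) (c, e) := rfl
    rw [h0, hp]
  have e2 : M (c, e) (a, b) = M (a, b) (c, e) := by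
    have := congrFun (congrFun hs (a, b)) (c, e)
    simpa [Matrix.transpose_apply] using this
  have e3 : M (c, b) (a, e) = M (a, b) (c, e) := by
    have h0 : M (c, b) (a, e) = ptrans M (c, e) (a, b) := rfl
    rw [h0, hp]
    have := congrFun (congrFun hs (a, b)) (c, e)
    simpa [Matrix.transpose_apply] using this
  simp only [Matrix.zero_apply]
  linarith

/-- substitution `X v ↦ X^(w v) * C (X v)` into `Polynomial (MvPolynomial σ ℝ)`. -/
noncomputable def psiW {σ : Type*} (w : σ → ℕ) :
    MvPolynomial σ ℝ →ₐ[ℝ] Polynomial (MvPolynomial σ ℝ) :=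
  MvPolynomial.aeval fun v => Polynomial.X ^ (w v) * Polynomial.C (MvPolynomial.X v)

/-- weighted degree of a monomial -/
def wdeg {σ : Type*} (w : σ → ℕ) (m : σ →₀ ℕ) : ℕ := m.sum fun v e => w v * e

lemma psiW_X {σ : Type*} (w : σ → ℕ) (v : σ) :
    psiW w (MvPolynomial.X v) = Polynomial.X ^ (w v) * Polynomial.C (MvPolynomial.X v) := by
  simp [psiW]

lemma psiW_C {σ : Type*} (w : σ → ℕ) (r : ℝ) :
    psiW w (MvPolynomial.C r) = Polynomial.C (MvPolynomial.C r) := by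
  simp [psiW, MvPolynomial.algebraMap_eq, Polynomial.algebraMap_apply]

lemma psiW_monomial {σ : Type*} (w : σ → ℕ) (m : σ →₀ ℕ) (r : ℝ) :
    psiW w (monomial m r) =
      Polynomial.X ^ (wdeg w m) * Polynomial.C (monomial m r) := by
  rw [MvPolynomial.monomial_eq, _root_.map_mul]
  have h1 : psiW w (MvPolynomial.C r) = Polynomial.C (MvPolynomial.C r) := psiW_C w r
  have h2 : psiW w (m.prod fun n e => MvPolynomial.X n ^ e) =
      Polynomial.X ^ (wdeg w m) * Polynomial.C (m.prod fun n e => MvPolynomial.X n ^ e) := by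
    rw [map_finsuppProd]
    unfold Finsupp.prod wdeg Finsupp.sum
    have step : ∀ v ∈ m.support,
        psiW w (MvPolynomial.X v ^ m v) =
          Polynomial.X ^ (w v * m v) * Polynomial.C (MvPolynomial.X v ^ m v) := by
      intro v _
      rw [_root_.map_pow]
      simp only [psiW, MvPolynomial.aeval_X]
      rw [mul_pow, ← pow_mul, ← _root_.map_pow]
    rw [Finset.prod_congr rfl step, Finset.prod_mul_distrib,
      Finset.prod_pow_eq_pow_sum, ← _root_.map_prod]
  rw [h1, h2, _root_.map_mul]
  ring

lemma coeff_coeff_psiW {σ : Type*} (w : σ → ℕ) (P : MvPolynomial σ ℝ) (k : ℕ) (m : σ →₀ ℕ) :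
    MvPolynomial.coeff m ((psiW w P).coeff k) =
      if wdeg w m = k then MvPolynomial.coeff m P else 0 := by
  classical
  conv_lhs => rw [← MvPolynomial.support_sum_monomial_coeff P]
  rw [_root_.map_sum, Polynomial.finset_sum_coeff, MvPolynomial.coeff_sum]
  have step : ∀ m' ∈ P.support,
      MvPolynomial.coeff m ((psiW w (monomial m' (coeff m' P))).coeff k) =
        if m' = m then (if wdeg w m = k then coeff m P else 0) else 0 := by
    intro m' _
    rw [psiW_monomial, mul_comm, Polynomial.C_mul_X_pow_eq_monomial,
      Polynomial.coeff_monomial, apply_ite (MvPolynomial.coeff m),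
      MvPolynomial.coeff_monomial, MvPolynomial.coeff_zero]
    by_cases h1 : m' = m
    · subst h1; by_cases h2 : wdeg w m' = k <;> simp [h2]
    · by_cases h2 : wdeg w m' = k <;> simp [h1, h2]
  rw [Finset.sum_congr rfl step, Finset.sum_ite_eq' P.support m]
  by_cases hm : m ∈ P.support
  · simp [hm]
  · simp [hm, MvPolynomial.notMem_support_iff.mp hm]

/-- sum of squares of multivariate real polynomials is zero iff each is -/
lemma sum_sq_eq_zero {σ : Type*} {n : ℕ} (c : Fin n → MvPolynomial σ ℝ)
    (h : ∑ i, (c i) ^ 2 = 0) : ∀ i, c i = 0 := by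
  intro i
  have hz : ∀ x : σ → ℝ, MvPolynomial.eval x (c i) = 0 := by
    intro x
    have h1 : ∑ j, (MvPolynomial.eval x (c j)) ^ 2 = 0 := by
      have := congrArg (MvPolynomial.eval x) h
      simpa [_root_.map_sum, _root_.map_pow] using this
    have h2 : ∀ j ∈ Finset.univ, (0:ℝ) ≤ (MvPolynomial.eval x (c j)) ^ 2 :=
      fun j _ => sq_nonneg _
    have := (Finset.sum_eq_zero_iff_of_nonneg h2).mp h1 i (Finset.mem_univ i)
    exact (pow_eq_zero_iff two_ne_zero).mp this
  exact MvPolynomial.funext (p := c i) (q := 0) (fun x => by simpa using hz x)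

lemma coeff_sq_of_natDegree_le {R : Type*} [CommRing R] (p : Polynomial R) (N : ℕ)
    (h : p.natDegree ≤ N) : (p * p).coeff (N + N) = p.coeff N * p.coeff N := by
  rw [Polynomial.coeff_mul]
  rw [Finset.sum_eq_single (N, N)]
  · rintro ⟨j, k⟩ hmem hne
    rw [Finset.HasAntidiagonal.mem_antidiagonal] at hmem
    have : N < j ∨ N < k := by
      by_contra hcon
      push_neg at hcon
      apply hne
      have : j = N ∧ k = N := by omega
      simp [this.1, this.2]
    rcases this with hj | hk
    · rw [Polynomial.coeff_eq_zero_of_natDegree_lt (lt_of_le_of_lt h hj), zero_mul]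
    · rw [Polynomial.coeff_eq_zero_of_natDegree_lt (lt_of_le_of_lt h hk), mul_zero]
  · intro hni
    exfalso; exact hni (by simp [Finset.mem_antidiagonal])

/-- main SOS degree-reduction step -/
lemma sos_step {σ : Type*} {n : ℕ} (p : MvPolynomial σ ℝ)
    (q : Fin n → Polynomial (MvPolynomial σ ℝ))
    (hq : ∑ i, (q i) ^ 2 = Polynomial.X ^ 2 * Polynomial.C p) :
    ∑ i, ((q i).coeff 1) ^ 2 = p := by
  have hXC : ∀ k : ℕ, (Polynomial.X ^ 2 * Polynomial.C p).coeff k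
      = if 2 = k then p else 0 := by
    intro k
    rw [mul_comm, Polynomial.C_mul_X_pow_eq_monomial, Polynomial.coeff_monomial]
  have hdeg : ∀ i, (q i).natDegree ≤ 1 := by
    by_contra hcon
    push_neg at hcon
    obtain ⟨i, hi⟩ := hcon
    have hne : (Finset.univ : Finset (Fin n)).Nonempty := ⟨i, Finset.mem_univ i⟩
    set N := Finset.univ.sup fun j => (q j).natDegree with hN
    obtain ⟨i0, _, hi0⟩ := Finset.exists_mem_eq_sup Finset.univ hne fun j => (q j).natDegree
    have hub : ∀ j, (q j).natDegree ≤ N := by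
      intro j; rw [hN]
      exact Finset.le_sup (f := fun j => (q j).natDegree) (Finset.mem_univ j)
    have hN2 : 2 ≤ N := le_trans hi (hub i)
    have hcoe : ∑ j, ((q j).coeff N) ^ 2 = 0 := by
      have h1 := congrArg (fun r => Polynomial.coeff r (N + N)) hq
      rw [Polynomial.finset_sum_coeff] at h1
      have h2 : ∀ j ∈ Finset.univ, ((q j) ^ 2).coeff (N + N) = ((q j).coeff N) ^ 2 := by
        intro j _
        rw [sq, sq, coeff_sq_of_natDegree_le _ N (hub j)]
      rw [Finset.sum_congr rfl h2] at h1
      rw [h1, hXC]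
      have : ¬ (2 = N + N) := by omega
      simp [this]
    have := sum_sq_eq_zero _ hcoe i0
    have hq0 : q i0 = 0 := by
      have hlc : (q i0).leadingCoeff = 0 := by rw [Polynomial.leadingCoeff, ← hi0]; exact this
      exact Polynomial.leadingCoeff_eq_zero.mp hlc
    rw [hq0, Polynomial.natDegree_zero] at hi0
    omega
  have hc0 : ∀ i, (q i).coeff 0 = 0 := by
    have h1 := congrArg (fun r => Polynomial.coeff r 0) hq
    rw [Polynomial.finset_sum_coeff] at h1
    have h2 : ∀ j ∈ Finset.univ, ((q j) ^ 2).coeff 0 = ((q j).coeff 0) ^ 2 := by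
      intro j _
      rw [sq, Polynomial.mul_coeff_zero, ← sq]
    rw [Finset.sum_congr rfl h2, hXC] at h1
    norm_num at h1
    exact sum_sq_eq_zero _ h1
  have hform : ∀ i, q i = Polynomial.X * Polynomial.C ((q i).coeff 1) := by
    intro i
    conv_lhs => rw [Polynomial.eq_X_add_C_of_natDegree_le_one (hdeg i)]
    rw [hc0 i, _root_.map_zero, add_zero, mul_comm]
  have hsum : ∑ i, (q i) ^ 2
      = Polynomial.X ^ 2 * Polynomial.C (∑ i, ((q i).coeff 1) ^ 2) := by
    rw [_root_.map_sum, Finset.mul_sum]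
    refine Finset.sum_congr rfl fun i _ => ?_
    conv_lhs => rw [hform i]
    rw [mul_pow, ← _root_.map_pow]
  rw [hsum] at hq
  have hX : (Polynomial.X : Polynomial (MvPolynomial σ ℝ)) ^ 2 ≠ 0 :=
    pow_ne_zero _ Polynomial.X_ne_zero
  exact Polynomial.C_injective (mul_left_cancel₀ hX hq)

def w1 : (Fin d ⊕ Fin d) → ℕ := Sum.elim (fun _ => 1) (fun _ => 0)
def w2 : (Fin d ⊕ Fin d) → ℕ := Sum.elim (fun _ => 0) (fun _ => 1)

lemma psiW_quartic1 (A : RMat2 d) :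
    psiW w1 (quarticPoly A) = Polynomial.X ^ 2 * Polynomial.C (quarticPoly A) := by
  unfold quarticPoly
  rw [_root_.map_sum, _root_.map_sum (Polynomial.C), Finset.mul_sum]
  refine Finset.sum_congr rfl fun a _ => ?_
  rw [_root_.map_sum, _root_.map_sum (Polynomial.C), Finset.mul_sum]
  refine Finset.sum_congr rfl fun b _ => ?_
  rw [_root_.map_sum, _root_.map_sum (Polynomial.C), Finset.mul_sum]
  refine Finset.sum_congr rfl fun c _ => ?_
  rw [_root_.map_sum, _root_.map_sum (Polynomial.C), Finset.mul_sum]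
  refine Finset.sum_congr rfl fun e _ => ?_
  rw [_root_.map_mul, _root_.map_mul, _root_.map_mul, _root_.map_mul, psiW_C, psiW_X, psiW_X, psiW_X, psiW_X]
  simp only [w1, Sum.elim_inl, Sum.elim_inr, pow_one, pow_zero, one_mul]
  rw [_root_.map_mul, _root_.map_mul, _root_.map_mul, _root_.map_mul]
  ring

lemma psiW_quartic2 (A : RMat2 d) :
    psiW w2 (quarticPoly A) = Polynomial.X ^ 2 * Polynomial.C (quarticPoly A) := by
  unfold quarticPoly
  rw [_root_.map_sum, _root_.map_sum (Polynomial.C), Finset.mul_sum]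
  refine Finset.sum_congr rfl fun a _ => ?_
  rw [_root_.map_sum, _root_.map_sum (Polynomial.C), Finset.mul_sum]
  refine Finset.sum_congr rfl fun b _ => ?_
  rw [_root_.map_sum, _root_.map_sum (Polynomial.C), Finset.mul_sum]
  refine Finset.sum_congr rfl fun c _ => ?_
  rw [_root_.map_sum, _root_.map_sum (Polynomial.C), Finset.mul_sum]
  refine Finset.sum_congr rfl fun e _ => ?_
  rw [_root_.map_mul, _root_.map_mul, _root_.map_mul, _root_.map_mul, psiW_C, psiW_X, psiW_X, psiW_X, psiW_X]
  simp only [w2, Sum.elim_inl, Sum.elim_inr, pow_one, pow_zero, one_mul]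
  rw [_root_.map_mul, _root_.map_mul, _root_.map_mul, _root_.map_mul]
  ring

lemma nat_sum_eq_one {α : Type*} [Fintype α] [DecidableEq α] (f : α → ℕ)
    (h : ∑ a, f a = 1) : ∃ a0, f a0 = 1 ∧ ∀ x, x ≠ a0 → f x = 0 := by
  have hex : ∃ a0, f a0 ≠ 0 := by
    by_contra hc
    push_neg at hc
    simp [hc] at h
  obtain ⟨a0, ha0⟩ := hex
  have hsplit := Finset.add_sum_erase Finset.univ f (Finset.mem_univ a0)
  rw [← hsplit] at h
  have hrest : ∑ x ∈ Finset.univ.erase a0, f x = 0 := by omega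
  refine ⟨a0, by omega, fun x hx => ?_⟩
  exact (Finset.sum_eq_zero_iff.mp hrest) x (Finset.mem_erase.mpr ⟨hx, Finset.mem_univ x⟩)

lemma wdeg_eq_sum (w : (Fin d ⊕ Fin d) → ℕ) (m : (Fin d ⊕ Fin d) →₀ ℕ) :
    wdeg w m = ∑ v, w v * m v := by
  unfold wdeg
  rw [Finsupp.sum_fintype]
  intro v; simp

lemma form_of_wdeg (m : (Fin d ⊕ Fin d) →₀ ℕ)
    (h1 : wdeg w1 m = 1) (h2 : wdeg w2 m = 1) :
    ∃ a b, m = Finsupp.single (Sum.inl a) 1 + Finsupp.single (Sum.inr b) 1 := by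
  rw [wdeg_eq_sum, Fintype.sum_sum_type] at h1 h2
  simp only [w1, w2, Sum.elim_inl, Sum.elim_inr, one_mul, zero_mul, Finset.sum_const_zero,
    add_zero, zero_add] at h1 h2
  obtain ⟨a0, ha1, ha2⟩ := nat_sum_eq_one _ h1
  obtain ⟨b0, hb1, hb2⟩ := nat_sum_eq_one _ h2
  refine ⟨a0, b0, ?_⟩
  ext v
  rcases v with a | b
  · by_cases ha : a = a0
    · subst ha; simp [Finsupp.single_apply, ha1]
    · simp [Finsupp.single_apply, ha2 a ha, Ne.symm ha]
  · by_cases hb : b = b0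
    · subst hb; simp [Finsupp.single_apply, hb1]
    · simp [Finsupp.single_apply, hb2 b hb, Ne.symm hb]

lemma form_inj (a b a0 b0 : Fin d)
    (h : Finsupp.single (Sum.inl a) (1:ℕ) + Finsupp.single (Sum.inr b) 1
       = Finsupp.single (Sum.inl a0) 1 + Finsupp.single (Sum.inr b0) 1) :
    a = a0 ∧ b = b0 := by
  constructor
  · have := DFunLike.congr_fun h (Sum.inl a)
    simp [Finsupp.single_apply] at this
    by_cases hh : a0 = a
    · exact hh.symm
    · simp [hh] at this
  · have := DFunLike.congr_fun h (Sum.inr b)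
    simp [Finsupp.single_apply] at this
    by_cases hh : b0 = b
    · exact hh.symm
    · simp [hh] at this

/-- bilinear representation -/
lemma bilinear_rep (c : MvPolynomial (Fin d ⊕ Fin d) ℝ)
    (hc : ∀ m, coeff m c ≠ 0 → wdeg w1 m = 1 ∧ wdeg w2 m = 1) :
    c = ∑ q : Fin d × Fin d,
      MvPolynomial.C
          (coeff (Finsupp.single (Sum.inl q.1) 1 + Finsupp.single (Sum.inr q.2) 1) c) *
        MvPolynomial.X (Sum.inl q.1) * MvPolynomial.X (Sum.inr q.2) := by
  have mono2 : ∀ (r : ℝ) (i j : Fin d ⊕ Fin d),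
      (MvPolynomial.C r * MvPolynomial.X i * MvPolynomial.X j
          : MvPolynomial (Fin d ⊕ Fin d) ℝ)
        = monomial (Finsupp.single i 1 + Finsupp.single j 1) r := by
    intro r i j
    rw [← pow_one (MvPolynomial.X i), ← pow_one (MvPolynomial.X j), X_pow_eq_monomial,
      X_pow_eq_monomial, mul_assoc, monomial_mul, C_mul_monomial]
    norm_num
  apply MvPolynomial.ext
  intro m
  rw [MvPolynomial.coeff_sum]
  have step : ∀ q : Fin d × Fin d, q ∈ Finset.univ → MvPolynomial.coeff m
      (MvPolynomial.C
          (coeff (Finsupp.single (Sum.inl q.1) 1 + Finsupp.single (Sum.inr q.2) 1) c) *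
        MvPolynomial.X (Sum.inl q.1) * MvPolynomial.X (Sum.inr q.2)) =
      if Finsupp.single (Sum.inl q.1) 1 + Finsupp.single (Sum.inr q.2) 1 = m then
        coeff (Finsupp.single (Sum.inl q.1) 1 + Finsupp.single (Sum.inr q.2) 1) c else 0 := by
    intro q _
    rw [mono2, MvPolynomial.coeff_monomial]
  rw [Finset.sum_congr rfl step]
  by_cases hm : ∃ a b, m = Finsupp.single (Sum.inl a) 1 + Finsupp.single (Sum.inr b) 1
  · obtain ⟨a0, b0, rfl⟩ := hm
    rw [Finset.sum_eq_single (a0, b0)]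
    · simp
    · rintro ⟨a, b⟩ _ hne
      rw [if_neg]
      intro hcon
      obtain ⟨h1, h2⟩ := form_inj a b a0 b0 hcon
      exact hne (by simp [h1, h2])
    · intro hni; exact absurd (Finset.mem_univ _) hni
  · push_neg at hm
    have hzero : coeff m c = 0 := by
      by_contra hc0
      obtain ⟨h1, h2⟩ := hc m hc0
      obtain ⟨a, b, heq⟩ := form_of_wdeg m h1 h2
      exact hm a b heq
    rw [hzero]
    symm
    apply Finset.sum_eq_zero
    rintro ⟨a, b⟩ _
    rw [if_neg]
    intro hcon
    exact hm a b hcon.symm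

/-- quartic polynomial of an outer product is a square -/
lemma quartic_vecMulVec (v : Fin d × Fin d → ℝ) :
    quarticPoly (Matrix.vecMulVec v v) =
      (∑ q : Fin d × Fin d, MvPolynomial.C (v q) * MvPolynomial.X (Sum.inl q.1) *
        MvPolynomial.X (Sum.inr q.2)) ^ 2 := by
  rw [sq, Finset.sum_mul_sum, quartic_flat, Fintype.sum_prod_type]
  refine Finset.sum_congr rfl fun q _ => Finset.sum_congr rfl fun r _ => ?_
  rw [Matrix.vecMulVec_apply, _root_.map_mul]
  ring

lemma vecMulVec_posSemidef (v : Fin d × Fin d → ℝ) :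
    (Matrix.vecMulVec v v).PosSemidef := by
  refine Matrix.PosSemidef.of_dotProduct_mulVec_nonneg ?_ ?_
  · ext p q; simp [Matrix.vecMulVec_apply, mul_comm]
  · intro x
    have hval : dotProduct (star x) ((Matrix.vecMulVec v v).mulVec x)
        = (∑ q, v q * x q) ^ 2 := by
      simp only [dotProduct, Matrix.mulVec, Matrix.vecMulVec_apply, star_trivial]
      rw [sq, Finset.sum_mul_sum]
      refine Finset.sum_congr rfl fun p _ => ?_
      rw [Finset.mul_sum]
      refine Finset.sum_congr rfl fun q _ => ?_
      ring
    rw [hval]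
    positivity

lemma sum_posSemidef {ι : Type*} (s : Finset ι) (M : ι → RMat2 d)
    (h : ∀ i ∈ s, (M i).PosSemidef) : (∑ i ∈ s, M i).PosSemidef := by
  classical
  induction s using Finset.induction with
  | empty => simpa using (Matrix.PosSemidef.zero : (0 : RMat2 d).PosSemidef)
  | @insert a s ha ih =>
    rw [Finset.sum_insert ha]
    exact (h a (Finset.mem_insert_self a s)).add
      (ih fun i hi => h i (Finset.mem_insert_of_mem hi))

lemma half_psd (M : RMat2 d) (h : M.PosSemidef) : ((1/2 : ℝ) • M).PosSemidef := by
  refine Matrix.PosSemidef.of_dotProduct_mulVec_nonneg ?_ ?_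
  · unfold Matrix.IsHermitian
    rw [Matrix.conjTranspose_smul, h.1.eq]
    norm_num
  · intro x
    rw [Matrix.smul_mulVec, dotProduct_smul]
    have := h.dotProduct_mulVec_nonneg x
    simp only [smul_eq_mul]
    positivity

end Stmt16Aux

open MvPolynomial Finset in
/-- for a symmetric operator `A` on `X ⊗ X` (`X = ℝ^d`) invariant
under partial transposition, the polynomial `Σ A_{ab,cd} x^a y^b x^c y^d` is a
sum of squares of real polynomials iff `A = B + (id⊗t)B` for some positive
semidefinite `B`. -/
theorem stmt16 (d : ℕ) (hd : 0 < d) (A : RMat2 d)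
    (hsymm : A.IsSymm) (hpt : ptrans A = A) :
    (∃ (n : ℕ) (P : Fin n → MvPolynomial (Fin d ⊕ Fin d) ℝ),
        quarticPoly A = ∑ i, (P i) ^ 2) ↔
      ∃ B : RMat2 d, B.PosSemidef ∧ A = B + ptrans B := by
  constructor
  · -- hard direction: SOS ⇒ decomposition
    rintro ⟨n, P, hP⟩
    -- Step 1: reduce to x-degree 1
    have h1 : ∑ i, (psiW w1 (P i)) ^ 2 = Polynomial.X ^ 2 * Polynomial.C (quarticPoly A) := by
      rw [← psiW_quartic1 A, hP, _root_.map_sum]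
      exact Finset.sum_congr rfl fun i _ => (_root_.map_pow _ _ _).symm
    set b : Fin n → MvPolynomial (Fin d ⊕ Fin d) ℝ :=
      fun i => (psiW w1 (P i)).coeff 1 with hbdef
    have hb : ∑ i, (b i) ^ 2 = quarticPoly A := sos_step _ _ h1
    -- Step 2: reduce to y-degree 1
    have h2 : ∑ i, (psiW w2 (b i)) ^ 2 = Polynomial.X ^ 2 * Polynomial.C (quarticPoly A) := by
      rw [← psiW_quartic2 A, ← hb, _root_.map_sum]
      exact Finset.sum_congr rfl fun i _ => (_root_.map_pow _ _ _).symm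
    set cp : Fin n → MvPolynomial (Fin d ⊕ Fin d) ℝ :=
      fun i => (psiW w2 (b i)).coeff 1 with hcpdef
    have hcp : ∑ i, (cp i) ^ 2 = quarticPoly A := sos_step _ _ h2
    -- the cp i are bilinear
    have hcond : ∀ i m, coeff m (cp i) ≠ 0 → wdeg w1 m = 1 ∧ wdeg w2 m = 1 := by
      intro i m h
      have hA2 : coeff m (cp i) = if wdeg w2 m = 1 then coeff m (b i) else 0 :=
        coeff_coeff_psiW w2 (b i) 1 m
      have hA1 : coeff m (b i) = if wdeg w1 m = 1 then coeff m (P i) else 0 :=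
        coeff_coeff_psiW w1 (P i) 1 m
      rw [hA2] at h
      split_ifs at h with hw2
      · rw [hA1] at h
        split_ifs at h with hw1
        · exact ⟨hw1, hw2⟩
        · exact absurd rfl h
      · exact absurd rfl h
    set v : Fin n → (Fin d × Fin d) → ℝ := fun i q =>
      coeff (Finsupp.single (Sum.inl q.1) 1 + Finsupp.single (Sum.inr q.2) 1) (cp i) with hvdef
    have hrep : ∀ i, cp i = ∑ q : Fin d × Fin d,
        MvPolynomial.C (v i q) * MvPolynomial.X (Sum.inl q.1) * MvPolynomial.X (Sum.inr q.2) :=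
      fun i => bilinear_rep (cp i) (hcond i)
    -- Gram matrix
    set G : RMat2 d := ∑ i, Matrix.vecMulVec (v i) (v i) with hGdef
    have hGq : quarticPoly G = quarticPoly A := by
      rw [hGdef, quartic_sum, ← hcp]
      refine Finset.sum_congr rfl fun i _ => ?_
      rw [quartic_vecMulVec, ← hrep i]
    have hGpsd : G.PosSemidef :=
      sum_posSemidef _ _ fun i _ => vecMulVec_posSemidef (v i)
    have hGs : ∀ p q, G q p = G p q := by
      intro p q
      have := congrFun (congrFun hGpsd.1 p) q
      simpa [Matrix.conjTranspose_apply] using this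
    have hAs : ∀ p q, A q p = A p q := by
      intro p q
      have := congrFun (congrFun hsymm p) q
      simpa [Matrix.transpose_apply] using this
    have hptGs : ∀ p q, ptrans G q p = ptrans G p q := by
      intro p q
      show G (q.1, p.2) (p.1, q.2) = G (p.1, q.2) (q.1, p.2)
      exact hGs (p.1, q.2) (q.1, p.2)
    have hApt : ∀ (p q : Fin d × Fin d), A (p.1, q.2) (q.1, p.2) = A p q := by
      intro p q
      have := congrFun (congrFun hpt p) q
      simpa [ptrans] using this
    -- the symmetrized difference
    set M : RMat2 d := A + A - (G + ptrans G) with hMdef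
    have hMq : quarticPoly M = 0 := by
      rw [hMdef, quartic_sub, quartic_add, quartic_add, quartic_ptrans, hGq]
      ring
    have hMsym : M.IsSymm := by
      unfold Matrix.IsSymm
      ext p q
      simp only [Matrix.transpose_apply, hMdef, Matrix.sub_apply, Matrix.add_apply]
      rw [hAs p q, hGs p q, hptGs p q]
    have hMpt : ptrans M = M := by
      ext p q
      show M (p.1, q.2) (q.1, p.2) = M p q
      simp only [hMdef, Matrix.sub_apply, Matrix.add_apply]
      have e1 : G (p.1, q.2) (q.1, p.2) = ptrans G p q := rfl
      have e2 : ptrans G (p.1, q.2) (q.1, p.2) = G p q := by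
        show G ((p.1, q.2).1, (q.1, p.2).2) ((q.1, p.2).1, (p.1, q.2).2) = G p q
        simp
      rw [hApt p q, e1, e2]
      ring
    have hM0 : M = 0 := quartic_inj M hMsym hMpt hMq
    have hAG : ∀ p q, A p q + A p q = G p q + ptrans G p q := by
      intro p q
      have := congrFun (congrFun hM0 p) q
      simp only [hMdef, Matrix.sub_apply, Matrix.add_apply, Matrix.zero_apply] at this
      linarith
    refine ⟨(1/2 : ℝ) • G, half_psd G hGpsd, ?_⟩
    ext p q
    have h2A := hAG p q
    have hptsmul : ptrans ((1/2 : ℝ) • G) p q = (1/2 : ℝ) * ptrans G p q := rfl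
    simp only [Matrix.add_apply, Matrix.smul_apply, smul_eq_mul, hptsmul]
    linarith
  · -- easy direction: decomposition ⇒ SOS
    rintro ⟨B, hB, hA⟩
    obtain ⟨Cm, hC⟩ : ∃ Cm : RMat2 d, B = Cmᴴ * Cm := by
      open scoped MatrixOrder in exact CStarAlgebra.nonneg_iff_eq_star_mul_self.mp hB.nonneg
    have hBsum : B = ∑ r : Fin d × Fin d,
        Matrix.vecMulVec (fun p => Cm r p) (fun p => Cm r p) := by
      ext p q
      rw [hC]
      simp [Matrix.mul_apply, Matrix.conjTranspose_apply, Matrix.sum_apply,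
        Matrix.vecMulVec_apply]
    set L : (Fin d × Fin d) → MvPolynomial (Fin d ⊕ Fin d) ℝ := fun r =>
      ∑ q : Fin d × Fin d, MvPolynomial.C (Cm r q) * MvPolynomial.X (Sum.inl q.1) *
        MvPolynomial.X (Sum.inr q.2) with hLdef
    have hqB : quarticPoly B = ∑ r : Fin d × Fin d, (L r) ^ 2 := by
      rw [hBsum, quartic_sum]
      exact Finset.sum_congr rfl fun r _ => quartic_vecMulVec _
    refine ⟨d * d, fun i => MvPolynomial.C (Real.sqrt 2) * L (finProdFinEquiv.symm i), ?_⟩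
    have hsq : ∀ r, (MvPolynomial.C (Real.sqrt 2) * L r) ^ 2
        = MvPolynomial.C (2:ℝ) * (L r) ^ 2 := by
      intro r
      rw [mul_pow, ← _root_.map_pow, Real.sq_sqrt (by norm_num : (0:ℝ) ≤ 2)]
    calc quarticPoly A = quarticPoly B + quarticPoly (ptrans B) := by
          rw [hA, quartic_add]
      _ = quarticPoly B + quarticPoly B := by rw [quartic_ptrans]
      _ = MvPolynomial.C (2:ℝ) * quarticPoly B := by
          rw [_root_.map_ofNat, two_mul]
      _ = ∑ r : Fin d × Fin d, MvPolynomial.C (2:ℝ) * (L r) ^ 2 := by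
          rw [hqB, Finset.mul_sum]
      _ = ∑ r : Fin d × Fin d, (MvPolynomial.C (Real.sqrt 2) * L r) ^ 2 := by
          exact Finset.sum_congr rfl fun r _ => (hsq r).symm
      _ = ∑ i : Fin (d * d), (MvPolynomial.C (Real.sqrt 2) * L (finProdFinEquiv.symm i)) ^ 2 :=
          (Equiv.sum_comp finProdFinEquiv.symm
            (fun r => (MvPolynomial.C (Real.sqrt 2) * L r) ^ 2)).symm
end

section
/- Let E₁ = diag(1,0,1,0), E₂ = diag(0,1,0,1), E₃ = diag(1,1,0,0), E₄ = diag(0,0,1,1), regarded as linear operators on ℂ⁴, and let ρ = (1/16)·Σ_{i=1}^4 E_i⊗E_i, an operator on ℂ⁴⊗ℂ⁴. Then ρ is a separable state whose length equals 4 and whose Schmidt rank equals 3. -/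
open scoped ComplexOrder Kronecker
open Matrix

variable {n : ℕ}

/-- The diagonal matrices `E₁, E₂, E₃, E₄` of the example. -/
noncomputable def Ediag : Fin 4 → Matrix (Fin 4) (Fin 4) ℂ :=
  ![Matrix.diagonal ![1, 0, 1, 0], Matrix.diagonal ![0, 1, 0, 1],
    Matrix.diagonal ![1, 1, 0, 0], Matrix.diagonal ![0, 0, 1, 1]]

/-- The state `ρ = (1/16) Σ_{i=1}^4 E_i ⊗ E_i` on `ℂ⁴ ⊗ ℂ⁴`. -/
noncomputable def rhoExample : MatH 4 4 :=
  (1 / 16 : ℂ) • ∑ i : Fin 4, Ediag i ⊗ₖ Ediag i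

set_option maxRecDepth 20000

namespace Stmt19Aux

/-- Componentwise "less or equal" on `Bool × Bool × Bool`. -/
def leB (a b : Bool × Bool × Bool) : Bool :=
  (!a.1 || b.1) && (!a.2.1 || b.2.1) && (!a.2.2 || b.2.2)

/-- There is no antichain of size 4 in the Boolean cube `{0,1}^3`. -/
theorem noAntichain4 : ∀ a b c d : Bool × Bool × Bool,
    (leB a b || leB b a || leB a c || leB c a || leB a d || leB d a ||
     leB b c || leB c b || leB b d || leB d b || leB c d || leB d c) = true := by decide

/-- The matrix of diagonal entries `16·ρ((x,y),(x,y))`. -/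
def Mmat : Matrix (Fin 4) (Fin 4) ℂ := !![2,1,1,0;1,2,0,1;1,0,2,1;0,1,1,2]

lemma rho_eq_diag :
    rhoExample = Matrix.diagonal (fun p : Fin 4 × Fin 4 => Mmat p.1 p.2 / 16) := by
  ext ⟨x,y⟩ ⟨z,w⟩
  simp [rhoExample, Ediag, Matrix.sum_apply, Matrix.kroneckerMap_apply, Fin.sum_univ_four,
    Matrix.diagonal_apply]
  fin_cases x <;> fin_cases y <;> fin_cases z <;> fin_cases w <;>
    simp [Mmat, Matrix.diagonal_apply] <;> norm_num

lemma mmat_nonneg : ∀ x y : Fin 4, 0 ≤ Mmat x y / 16 := by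
  intro x y
  fin_cases x <;> fin_cases y <;> simp [Mmat] <;> norm_num [Complex.nonneg_iff]

lemma mmat_rev (x : Fin 4) : Mmat x x.rev = 0 := by
  fin_cases x <;> simp [Mmat] <;> rfl

lemma mmat_ne_zero {x y : Fin 4} (h : y ≠ x.rev) : Mmat x y / 16 ≠ 0 := by
  fin_cases x <;> fin_cases y <;> simp_all [Mmat, Fin.rev] <;> norm_num

lemma rho_psd : rhoExample.PosSemidef := by
  rw [rho_eq_diag]
  exact Matrix.posSemidef_diagonal_iff.mpr fun p => mmat_nonneg p.1 p.2

lemma rho_trace : rhoExample.trace = 1 := by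
  rw [rho_eq_diag, Matrix.trace_diagonal]
  simp [Fintype.sum_prod_type, Fin.sum_univ_four, Mmat]
  norm_num

lemma smul_ediag_psd (c : ℂ) (hc : 0 ≤ c.re) (hc' : c.im = 0) (i : Fin 4) :
    (c • Ediag i).PosSemidef := by
  fin_cases i <;>
  · show (c • Matrix.diagonal _).PosSemidef
    rw [← Matrix.diagonal_smul]
    refine Matrix.posSemidef_diagonal_iff.mpr fun j => ?_
    fin_cases j <;> simp [Complex.nonneg_iff, hc, hc'] <;>
      simp [Complex.nonneg_iff, Complex.mul_re, Complex.mul_im, hc, hc']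

lemma ediag_psd (i : Fin 4) : (Ediag i).PosSemidef := by
  fin_cases i <;>
  · refine Matrix.posSemidef_diagonal_iff.mpr fun j => ?_
    fin_cases j <;> norm_num [Complex.nonneg_iff]

lemma ediag_trace (i : Fin 4) : (Ediag i).trace = 2 := by
  fin_cases i <;> simp [Ediag, Matrix.trace_diagonal, Fin.sum_univ_four] <;> norm_num

/-- Diagonal entries of a PSD matrix are nonnegative. -/
lemma diag_nn {M : Mat 4} (h : M.PosSemidef) (x : Fin 4) : 0 ≤ M x x := by
  exact h.diag_nonneg

lemma cmul_nonneg {a b : ℂ} (ha : 0 ≤ a) (hb : 0 ≤ b) : 0 ≤ a * b := by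
  rw [Complex.nonneg_iff] at *
  constructor
  · simp [Complex.mul_re, ← ha.2, ← hb.2]; exact mul_nonneg ha.1 hb.1
  · simp [Complex.mul_im, ← ha.2, ← hb.2]

/-- Padding a sum over `Fin l`, `l ≤ 3`, to a sum over `Fin 3`. -/
lemma pad3 {α : Type*} [AddCommMonoid α] {l : ℕ} (hl : l ≤ 3) (f : Fin l → α) :
    ∑ i : Fin l, f i = ∑ i : Fin 3, (if h : (i : ℕ) < l then f ⟨i, h⟩ else 0) := by
  interval_cases l <;>
    simp [Fin.sum_univ_three, Fin.sum_univ_two, Fin.sum_univ_one, Fin.sum_univ_succ]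

/-- The key entrywise identity from a 3-term decomposition. -/
lemma entry_eq {A B : Fin 3 → Mat 4} (hρ : rhoExample = ∑ i, A i ⊗ₖ B i) (x y : Fin 4) :
    (∑ i : Fin 3, A i x x * B i y y) = Mmat x y / 16 := by
  have := congrFun (congrFun hρ.symm (x, y)) (x, y)
  rw [rho_eq_diag] at this
  simpa [Matrix.sum_apply, Matrix.kroneckerMap_apply, Matrix.diagonal_apply] using this

/-- No 3-term decomposition of `ρ` into tensor products of PSD matrices. -/
lemma no_three_psd (A B : Fin 3 → Mat 4) (hA : ∀ i, (A i).PosSemidef)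
    (hB : ∀ i, (B i).PosSemidef) (hρ : rhoExample = ∑ i, A i ⊗ₖ B i) : False := by
  classical
  have hzero : ∀ (i : Fin 3) (x : Fin 4), A i x x = 0 ∨ B i x.rev x.rev = 0 := by
    intro i x
    have hsum : (∑ j : Fin 3, A j x x * B j x.rev x.rev) = 0 := by
      rw [entry_eq hρ, mmat_rev]; simp
    have hterm : A i x x * B i x.rev x.rev = 0 :=
      (Finset.sum_eq_zero_iff_of_nonneg (fun j _ =>
        cmul_nonneg (diag_nn (hA j) x) (diag_nn (hB j) x.rev))).mp hsum i (Finset.mem_univ i)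
    exact mul_eq_zero.mp hterm
  have hcov : ∀ x y : Fin 4, y ≠ x.rev → ∃ i : Fin 3, A i x x ≠ 0 ∧ B i y y ≠ 0 := by
    intro x y hxy
    by_contra hcon
    push_neg at hcon
    have : (∑ i : Fin 3, A i x x * B i y y) = 0 := by
      refine Finset.sum_eq_zero fun i _ => ?_
      rcases Classical.em (A i x x = 0) with h | h
      · simp [h]
      · simp [hcon i h]
    rw [entry_eq hρ x y] at this
    exact mmat_ne_zero hxy this
  set χ : Fin 4 → Bool × Bool × Bool := fun x =>
    (decide (A 0 x x ≠ 0), decide (A 1 x x ≠ 0), decide (A 2 x x ≠ 0)) with hχ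
  have hkey : ∀ x z : Fin 4, x ≠ z → leB (χ x) (χ z) = false := by
    intro x z hxz
    have hyrev : z.rev ≠ x.rev := fun h => hxz (Fin.rev_injective h).symm
    obtain ⟨i, hAx, hBy⟩ := hcov x z.rev hyrev
    have hAz : A i z z = 0 := by
      rcases hzero i z with h | h
      · exact h
      · exact absurd h hBy
    have hAz' : ¬ (A i z z ≠ 0) := fun h => h hAz
    fin_cases i <;>
      simp_all [leB, hχ, Bool.and_eq_false_iff, Bool.or_eq_false_iff]
  have h4 := noAntichain4 (χ 0) (χ 1) (χ 2) (χ 3)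
  simp only [Bool.or_eq_true] at h4
  rcases h4 with ((((((((((h|h)|h)|h)|h)|h)|h)|h)|h)|h)|h)|h <;>
    exact absurd h (by rw [hkey _ _ (by decide)]; simp)

/-- Lower bound for the separable length. -/
lemma seplen_lb {l : ℕ} (h : HasSepLen 4 4 rhoExample l) : 4 ≤ l := by
  by_contra hlt
  push_neg at hlt
  have hl3 : l ≤ 3 := by omega
  obtain ⟨A, B, hA, hB, hρ⟩ := h
  set A' : Fin 3 → Mat 4 := fun i => if h : (i : ℕ) < l then A ⟨i, h⟩ else 0 with hA'
  set B' : Fin 3 → Mat 4 := fun i => if h : (i : ℕ) < l then B ⟨i, h⟩ else 0 with hB'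
  have hρ' : rhoExample = ∑ i : Fin 3, A' i ⊗ₖ B' i := by
    rw [hρ, pad3 hl3 (fun i => A i ⊗ₖ B i)]
    refine Finset.sum_congr rfl fun i _ => ?_
    by_cases h : (i : ℕ) < l <;> simp [hA', hB', h, Matrix.zero_kronecker]
  refine no_three_psd A' B' (fun i => ?_) (fun i => ?_) hρ'
  · by_cases h : (i : ℕ) < l
    · simpa [hA', h] using hA _
    · simpa [hA', h] using Matrix.PosSemidef.zero
  · by_cases h : (i : ℕ) < l
    · simpa [hB', h] using hB _
    · simpa [hB', h] using Matrix.PosSemidef.zero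

/-- Lower bound for the Schmidt rank. -/
lemma schmidt_lb {r : ℕ} (h : HasHermDecomp 4 4 rhoExample r) : 3 ≤ r := by
  by_contra hlt
  push_neg at hlt
  have hr : r ≤ 3 := by omega
  obtain ⟨A, B, _, _, hρ⟩ := h
  set A' : Fin 3 → Mat 4 := fun i => if h : (i : ℕ) < r then A ⟨i, h⟩ else 0 with hA'
  set B' : Fin 3 → Mat 4 := fun i => if h : (i : ℕ) < r then B ⟨i, h⟩ else 0 with hB'
  have hρ' : rhoExample = ∑ i : Fin 3, A' i ⊗ₖ B' i := by
    rw [hρ, pad3 hr (fun i => A i ⊗ₖ B i)]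
    refine Finset.sum_congr rfl fun i _ => ?_
    by_cases h : (i : ℕ) < r <;> simp [hA', hB', h, Matrix.zero_kronecker]
  have hA2 : A' 2 = 0 := by
    have h2 : ¬ (((2 : Fin 3) : ℕ) < r) := by
      simp only [Fin.isValue, Fin.val_two]; omega
    simp only [hA']
    exact dif_neg h2
  set e : Fin 3 → Fin 4 := ![0, 1, 2] with he
  set P : Matrix (Fin 3) (Fin 3) ℂ := Matrix.of (fun j i => A' i (e j) (e j)) with hP
  set Q : Matrix (Fin 3) (Fin 3) ℂ := Matrix.of (fun i k => B' i (e k) (e k)) with hQ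
  have hPQ : P * Q = Matrix.of (fun j k => Mmat (e j) (e k) / 16) := by
    ext j k
    simpa [hP, hQ, Matrix.mul_apply] using entry_eq hρ' (e j) (e k)
  have hdetP : P.det = 0 := by
    apply Matrix.det_eq_zero_of_column_eq_zero 2
    intro j
    simp [hP, hA2]
  have h1 : (P * Q).det = 0 := by rw [Matrix.det_mul, hdetP, zero_mul]
  rw [hPQ] at h1
  have h2 : (Matrix.of (fun j k => Mmat (e j) (e k) / 16) : Matrix (Fin 3) (Fin 3) ℂ).det
      = 4 / 4096 := by
    rw [Matrix.det_fin_three]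
    simp [Mmat, he]
    norm_num
  rw [h2] at h1
  norm_num at h1

end Stmt19Aux

/-- `ρ = (1/16) Σ E_i ⊗ E_i` is a separable state of length `4`
and Schmidt rank `3`. -/
theorem stmt19 :
    IsState rhoExample ∧ IsSepState 4 4 rhoExample ∧
      sepLength 4 4 rhoExample = 4 ∧ schmidtRank 4 4 rhoExample = 3 := by
  classical
  open Stmt19Aux in
  -- the basic decomposition with 1/16 weights
  have hsmul : ∀ (c d : ℂ) (i : Fin 4), (c • Ediag i) ⊗ₖ (d • Ediag i) = (c * d) • (Ediag i ⊗ₖ Ediag i) := by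
    intro c d i
    rw [Matrix.smul_kronecker, Matrix.kronecker_smul, smul_smul]
  refine ⟨⟨Stmt19Aux.rho_psd, Stmt19Aux.rho_trace⟩, ?_, ?_, ?_⟩
  · -- separability
    refine ⟨4, fun _ => (1/4 : ℝ), fun i => (1/2 : ℂ) • Ediag i, fun i => (1/2 : ℂ) • Ediag i,
      fun i => by norm_num, by norm_num, fun i => ⟨?_, ?_⟩, fun i => ⟨?_, ?_⟩, ?_⟩
    · exact Stmt19Aux.smul_ediag_psd _ (by norm_num) (by norm_num) i
    · rw [Matrix.trace_smul, Stmt19Aux.ediag_trace]; norm_num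
    · exact Stmt19Aux.smul_ediag_psd _ (by norm_num) (by norm_num) i
    · rw [Matrix.trace_smul, Stmt19Aux.ediag_trace]; norm_num
    · rw [rhoExample, Finset.smul_sum]
      refine Finset.sum_congr rfl fun i _ => ?_
      rw [hsmul, smul_smul]
      norm_num
  · -- sepLength = 4
    have mem4 : HasSepLen 4 4 rhoExample 4 := by
      refine ⟨fun i => (1/16 : ℂ) • Ediag i, Ediag, fun i =>
        Stmt19Aux.smul_ediag_psd _ (by norm_num) (by norm_num) i, fun i => Stmt19Aux.ediag_psd i, ?_⟩
      rw [rhoExample, Finset.smul_sum]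
      refine Finset.sum_congr rfl fun i _ => ?_
      rw [Matrix.smul_kronecker]
    refine le_antisymm (Nat.sInf_le mem4) (le_csInf ⟨4, mem4⟩ fun l hl => Stmt19Aux.seplen_lb hl)
  · -- schmidtRank = 3
    have mem3 : HasHermDecomp 4 4 rhoExample 3 := by
      refine ⟨fun i => (1/16 : ℂ) • Matrix.diagonal
          (![![1,0,0,-1], ![0,1,0,1], ![0,0,1,1]] i),
        fun i => Matrix.diagonal (![![2,1,1,0], ![1,2,0,1], ![1,0,2,1]] i), ?_, ?_, ?_⟩
      · intro i
        show _ᴴ = _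
        ext a b
        rw [Matrix.conjTranspose_apply]
        fin_cases i <;> fin_cases a <;> fin_cases b <;>
          simp [Matrix.diagonal_apply, Complex.ext_iff] <;> norm_num
      · intro i
        show _ᴴ = _
        ext a b
        rw [Matrix.conjTranspose_apply]
        fin_cases i <;> fin_cases a <;> fin_cases b <;>
          simp [Matrix.diagonal_apply, Complex.ext_iff] <;> norm_num
      · rw [Stmt19Aux.rho_eq_diag]
        ext ⟨x,y⟩ ⟨z,w⟩
        simp [Matrix.sum_apply, Matrix.kroneckerMap_apply, Fin.sum_univ_three,
          Matrix.diagonal_apply, Matrix.smul_apply]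
        fin_cases x <;> fin_cases y <;> fin_cases z <;> fin_cases w <;>
          simp [Stmt19Aux.Mmat] <;> norm_num
    refine le_antisymm (Nat.sInf_le mem3) (le_csInf ⟨3, mem3⟩ fun r hr => Stmt19Aux.schmidt_lb hr)
end
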